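/- arXiv:0712.2112 — 7 statements merged into one kernel-verified Lean document; each statement's English description precedes it below -/
import Mathlib

section
/- For every nonempty perfect set P ⊆ ℝ there exists a Dirichlet set D ⊆ ℝ such that P + D = ℝ, i.e., every real is the sum of an element of P and an element of D. -/
open MeasureTheory Filter Set Pointwise

/-- Distance from a real number to the nearest integer. -/
noncomputable def nintDist (x : ℝ) : ℝ := |x - round x|

/-- `E` is a Dirichlet set. -/
def IsDirichlet (E : Set ℝ) : Prop :=
  ∃ n : ℕ → ℕ, StrictMono n ∧ ∀ x ∈ E, ∀ k : ℕ, nintDist (n k * x) ≤ (1/2) ^ k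

/-- `E` is a pseudo-Dirichlet set. -/
def IsPseudoDirichlet (E : Set ℝ) : Prop :=
  ∃ n : ℕ → ℕ, StrictMono n ∧ ∀ x ∈ E, ∀ᶠ k in atTop, nintDist (n k * x) ≤ (1/2) ^ k

/-- `E` is an Arbault set. -/
def IsArbault (E : Set ℝ) : Prop :=
  ∃ n : ℕ → ℕ, StrictMono n ∧ ∀ x ∈ E,
    Tendsto (fun k => nintDist (n k * x)) atTop (nhds 0)

/-- `E` is an N-set. -/
def IsNSet (E : Set ℝ) : Prop :=
  ∃ a : ℕ → ℝ, (∀ n, 0 ≤ a n) ∧ ¬ Summable a ∧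
    ∀ x ∈ E, Summable (fun n => a n * nintDist (n * x))

/-- `s` is an Fσ set: a countable union of closed sets. -/
def IsFsigma (s : Set ℝ) : Prop :=
  ∃ f : ℕ → Set ℝ, (∀ n, IsClosed (f n)) ∧ s = ⋃ n, f n

namespace EKM

lemma nintDist_nonneg (x : ℝ) : 0 ≤ nintDist x := abs_nonneg _

lemma nintDist_le_half (x : ℝ) : nintDist x ≤ 1/2 := abs_sub_round x

lemma nintDist_le_int (x : ℝ) (m : ℤ) : nintDist x ≤ |x - m| := round_le x m

lemma nintDist_le_abs (x : ℝ) : nintDist x ≤ |x| := by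
  simpa using nintDist_le_int x 0

lemma nintDist_neg (x : ℝ) : nintDist (-x) = nintDist x := by
  apply le_antisymm
  · calc nintDist (-x) ≤ |(-x) - (-(round x) : ℤ)| := nintDist_le_int _ _
    _ = |x - round x| := by push_cast; rw [← abs_neg]; ring_nf
    _ = nintDist x := rfl
  · calc nintDist x ≤ |x - (-(round (-x)) : ℤ)| := nintDist_le_int _ _
    _ = |(-x) - round (-x)| := by push_cast; rw [← abs_neg]; ring_nf
    _ = nintDist (-x) := rfl

lemma nintDist_add_int (x : ℝ) (m : ℤ) : nintDist (x + m) = nintDist x := by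
  apply le_antisymm
  · calc nintDist (x + m) ≤ |(x + m) - (round x + m : ℤ)| := nintDist_le_int _ _
    _ = |x - round x| := by push_cast; ring_nf
  · calc nintDist x ≤ |x - (round (x + (m:ℝ)) - m : ℤ)| := nintDist_le_int _ _
    _ = |(x + m) - round (x + (m:ℝ))| := by push_cast; ring_nf

lemma nintDist_add_le (x y : ℝ) : nintDist (x + y) ≤ nintDist x + nintDist y := by
  calc nintDist (x + y) ≤ |(x + y) - (round x + round y : ℤ)| := nintDist_le_int _ _
  _ = |(x - round x) + (y - round y)| := by push_cast; ring_nf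
  _ ≤ |x - round x| + |y - round y| := abs_add_le _ _

lemma nintDist_le_add_abs (x y : ℝ) : nintDist x ≤ nintDist y + |x - y| := by
  calc nintDist x = nintDist (y + (x - y)) := by ring_nf
  _ ≤ nintDist y + nintDist (x - y) := nintDist_add_le _ _
  _ ≤ nintDist y + |x - y| := by linarith [nintDist_le_abs (x - y)]

open Real in
lemma cos_nintDist (u : ℝ) : Real.cos (2*π*u) = Real.cos (2*π*(nintDist u)) := by
  have h1 : Real.cos (2*π*u) = Real.cos (2*π*(u - round u)) := by
    have := Real.cos_sub_int_mul_two_pi (2*π*u) (round u)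
    rw [← this]; ring_nf
  have h2 : |2*π*(u - round u)| = 2*π*|u - round u| := by
    rw [abs_mul]
    congr 1
    exact abs_of_nonneg (by positivity)
  rw [h1, nintDist, ← Real.cos_abs (2*π*(u - round u)), h2]


open Real in
lemma cos_close (ε : ℝ) (hε : 0 < ε) :
    ∃ c : ℝ, 0 < c ∧ c ≤ 1 ∧ ∀ u : ℝ, 1 - c < (1 + Real.cos (2*π*u))/2 → nintDist u < ε := by
  rcases le_or_gt ε (1/2) with hle | hgt
  · have hS : (Set.Icc ε (1/2)).Nonempty := ⟨ε, le_refl _, hle⟩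
    have hcomp : IsCompact (Set.Icc ε (1/2)) := isCompact_Icc
    have hcont : ContinuousOn (fun d => (1 + Real.cos (2*π*d))/2) (Set.Icc ε (1/2)) := by
      fun_prop
    obtain ⟨d₀, hd₀S, hmax⟩ := hcomp.exists_isMaxOn hS hcont
    have hd₀lt : (1 + Real.cos (2*π*d₀))/2 < 1 := by
      have hcosle : Real.cos (2*π*d₀) ≤ 1 := Real.cos_le_one _
      rcases lt_or_eq_of_le hcosle with h | h
      · linarith
      · exfalso
        obtain ⟨n, hn⟩ := (Real.cos_eq_one_iff _).mp h
        have hπ : (0:ℝ) < π := Real.pi_pos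
        have : (n : ℝ) = d₀ := by
          have h2π : (0:ℝ) < 2*π := by positivity
          rw [mul_comm] at hn
          exact mul_left_cancel₀ (ne_of_gt h2π) hn
        have h1 : (0:ℝ) < n := by rw [this]; linarith [hd₀S.1]
        have h2 : (n:ℝ) ≤ 1/2 := by rw [this]; exact hd₀S.2
        have : (1:ℤ) ≤ n := by exact_mod_cast h1
        have : (1:ℝ) ≤ (n:ℝ) := by exact_mod_cast this
        linarith
    refine ⟨1 - (1 + Real.cos (2*π*d₀))/2, by linarith, ?_, ?_⟩
    · have : -1 ≤ Real.cos (2*π*d₀) := Real.neg_one_le_cos _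
      linarith
    · intro u hu
      by_contra hcon
      push_neg at hcon
      have hd : nintDist u ∈ Set.Icc ε (1/2) := ⟨hcon, nintDist_le_half u⟩
      have := hmax hd
      simp only [Set.mem_setOf_eq] at this
      rw [cos_nintDist u] at hu
      have : (1 + Real.cos (2*π*(nintDist u)))/2 ≤ (1 + Real.cos (2*π*d₀))/2 := this
      linarith
  · exact ⟨1, one_pos, le_refl 1, fun u _ => lt_of_le_of_lt (nintDist_le_half u) hgt⟩

lemma not_countable_nat_bool : ¬ Countable (ℕ → Bool) := by
  intro h
  have e : (Set ℕ) ≃ (ℕ → Bool) :=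
    (Equiv.arrowCongr (Equiv.refl ℕ) (Equiv.propEquivBool)).trans (Equiv.refl _)
  have : Countable (Set ℕ) := Countable.of_equiv _ e.symm
  obtain ⟨f, hf⟩ := (countable_iff_exists_injective (Set ℕ)).mp this
  exact Function.cantor_injective (fun s => f s) (fun a b hab => hf hab)

lemma portion_uncountable {P : Set ℝ} (hP : Perfect P) {q : ℝ} (hq : q ∈ P)
    {r : ℝ} (hr : 0 < r) : ¬ (P ∩ Metric.ball q r).Countable := by
  intro hcount
  have hU : q ∈ Metric.ball q (r/2) := by simp [Metric.mem_ball, hr, half_pos hr]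
  obtain ⟨hperf, hne⟩ := hP.closure_nhds_inter q hq hU Metric.isOpen_ball
  obtain ⟨f, hrange, _, hinj⟩ := hperf.exists_nat_bool_injection hne
  have hsub : closure (Metric.ball q (r/2) ∩ P) ⊆ P ∩ Metric.ball q r := by
    intro x hx
    have h1 : x ∈ closure P := closure_mono Set.inter_subset_right hx
    have h2 : x ∈ Metric.closedBall q (r/2) :=
      Metric.closure_ball_subset_closedBall (closure_mono Set.inter_subset_left hx)
    refine ⟨hP.closed.closure_subset_iff.mpr subset_rfl h1, ?_⟩
    rw [Metric.mem_closedBall] at h2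
    rw [Metric.mem_ball]
    linarith
  have : (Set.range f).Countable := hcount.mono (le_trans hrange hsub)
  have : Countable (ℕ → Bool) := by
    have := this.to_subtype
    exact Countable.of_equiv _ (Equiv.ofInjective f hinj).symm
  exact not_countable_nat_bool this

lemma seq_indep : ∀ (n : ℕ) (U : Fin n → Set ℝ), (∀ i, ¬ (U i).Countable) →
    ∃ x : Fin n → ℝ, (∀ i, x i ∈ U i) ∧
      ∀ (k : Fin n → ℤ) (c : ℤ), (∑ i, (k i : ℝ) * x i) + (c:ℝ) = 0 → ∀ i, k i = 0 := by
  intro n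
  induction n with
  | zero => exact fun U hU => ⟨fun _ => 0, fun i => i.elim0, fun k c h i => i.elim0⟩
  | succ n ih =>
    intro U hU
    obtain ⟨x', hx', hind⟩ := ih (fun i => U i.castSucc) (fun i => hU _)
    set A : Set ℝ :=
      Set.range (fun p : ℚ × (Fin n → ℚ) => (p.1 : ℝ) + ∑ i, (p.2 i : ℝ) * x' i) with hA
    have hAc : A.Countable := Set.countable_range _
    have hns : ¬ (U (Fin.last n)) ⊆ A := fun hsub => hU _ (hAc.mono hsub)
    obtain ⟨z, hzU, hzA⟩ := Set.not_subset.mp hns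
    refine ⟨Fin.snoc x' z, ?_, ?_⟩
    · intro i
      refine Fin.lastCases ?_ ?_ i
      · rw [Fin.snoc_last]; exact hzU
      · intro j; rw [Fin.snoc_castSucc]; exact hx' j
    · intro k c h
      rw [Fin.sum_univ_castSucc] at h
      simp only [Fin.snoc_castSucc, Fin.snoc_last] at h
      by_cases hk : k (Fin.last n) = 0
      · rw [hk] at h
        push_cast at h
        have h' : (∑ i, ((k i.castSucc : ℝ)) * x' i) + (c:ℝ) = 0 := by linarith
        have hz := hind (fun i => k i.castSucc) c h'
        intro i
        refine Fin.lastCases hk (fun j => hz j) i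
      · exfalso
        apply hzA
        have hkR : ((k (Fin.last n) : ℝ)) ≠ 0 := Int.cast_ne_zero.mpr hk
        refine ⟨((-c / (k (Fin.last n)) : ℚ), fun i => (-(k i.castSucc) / (k (Fin.last n)) : ℚ)), ?_⟩
        set kl : ℝ := (k (Fin.last n) : ℝ) with hkl
        set S : ℝ := ∑ i, ((k i.castSucc : ℝ)) * x' i with hS
        have key : z = (-(c:ℝ) - S) / kl := by
          rw [eq_div_iff hkR]
          linarith [h]
        push_cast
        rw [key]
        simp only [div_mul_eq_mul_div, ← Finset.sum_div, neg_mul]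
        rw [← add_div]
        congr 1
        rw [Finset.sum_neg_distrib, hS]
        ring

noncomputable def cexp (x : ℝ) : ℂ := Complex.exp (((2 * Real.pi * x : ℝ) : ℂ) * Complex.I)

lemma cexp_add (x y : ℝ) : cexp (x + y) = cexp x * cexp y := by
  rw [cexp, cexp, cexp, ← Complex.exp_add]
  congr 1
  push_cast
  ring

lemma cexp_zero : cexp 0 = 1 := by
  simp [cexp]

lemma cexp_nat_mul (x : ℝ) (a : ℕ) : cexp ((a:ℝ) * x) = (cexp x)^a := by
  rw [cexp, cexp, ← Complex.exp_nat_mul]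
  congr 1
  push_cast
  ring

lemma cexp_abs (x : ℝ) : ‖cexp x‖ = 1 := Complex.norm_exp_ofReal_mul_I _

lemma cexp_sum {ι : Type*} [Fintype ι] (v : ι → ℝ) :
    cexp (∑ i, v i) = ∏ i, cexp (v i) := by
  simp only [cexp]
  rw [← Complex.exp_sum]
  congr 1
  push_cast
  simp [Finset.mul_sum, Finset.sum_mul, mul_assoc]

lemma cexp_eq_one (x : ℝ) (h : cexp x = 1) : ∃ m : ℤ, x = m := by
  rw [cexp, Complex.exp_eq_one_iff] at h
  obtain ⟨m, hm⟩ := h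
  refine ⟨m, ?_⟩
  have hI : ((2 * Real.pi * x : ℝ) : ℂ) * Complex.I = ((m:ℂ) * (2 * Real.pi)) * Complex.I := by
    rw [hm]; ring
  have h2 := mul_right_cancel₀ Complex.I_ne_zero hI
  have hre : 2 * Real.pi * x = (m:ℝ) * (2 * Real.pi) := by exact_mod_cast h2
  nlinarith [hre, Real.pi_pos]

open Real in
lemma cexp_cos (x : ℝ) :
    (1 + cexp x) * (1 + cexp (-x)) = (((1 + Real.cos (2*π*x))/2 * 4 : ℝ) : ℂ) := by
  have h1 : cexp x * cexp (-x) = 1 := by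
    rw [← cexp_add]
    simp [cexp_zero]
  have h2 : cexp x + cexp (-x) = ((2 * Real.cos (2*π*x) : ℝ) : ℂ) := by
    have hneg : ((2 * π * (-x) : ℝ) : ℂ) = -(((2 * π * x : ℝ) : ℂ)) := by push_cast; ring
    rw [cexp, cexp, hneg, Complex.exp_mul_I, Complex.exp_mul_I, Complex.cos_neg, Complex.sin_neg]
    push_cast
    ring
  calc (1 + cexp x) * (1 + cexp (-x)) = 1 + (cexp x + cexp (-x)) + cexp x * cexp (-x) := by ring
  _ = 2 + ((2 * Real.cos (2*π*x) : ℝ) : ℂ) := by rw [h1, h2]; ring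
  _ = (((1 + Real.cos (2*π*x))/2 * 4 : ℝ) : ℂ) := by push_cast; ring

noncomputable def gfun (u : ℝ) : ℝ := (1 + Real.cos (2*Real.pi*u))/2

lemma gfun_nonneg (u : ℝ) : 0 ≤ gfun u := by
  have := Real.neg_one_le_cos (2*Real.pi*u); rw [gfun]; linarith

lemma gfun_le_one (u : ℝ) : gfun u ≤ 1 := by
  have := Real.cos_le_one (2*Real.pi*u); rw [gfun]; linarith

lemma cexp_gfun (x : ℝ) : (1 + cexp x) * (1 + cexp (-x)) = ((gfun x * 4 : ℝ) : ℂ) := by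
  rw [cexp_cos, gfun]

variable {ι : Type} [Fintype ι] [DecidableEq ι]

noncomputable def phi (δ t : ι → ℝ) (p : ℕ) (n : ℕ) : ℝ :=
  ∏ i, (gfun ((n:ℝ) * δ i - t i))^p

def kkf (J : ι → ℕ × ℕ) (i : ι) : ℤ := ((J i).1 : ℤ) - ((J i).2 : ℤ)

noncomputable def betaf (δ : ι → ℝ) (J : ι → ℕ × ℕ) : ℝ := ∑ i, (kkf J i : ℝ) * δ i

noncomputable def tauf (t : ι → ℝ) (J : ι → ℕ × ℕ) : ℝ := ∑ i, (kkf J i : ℝ) * t i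

noncomputable def Wf (p : ℕ) (J : ι → ℕ × ℕ) : ℝ :=
  ∏ i, ((p.choose (J i).1 : ℝ) * (p.choose (J i).2 : ℝ))

noncomputable def coeff (t : ι → ℝ) (p : ℕ) (J : ι → ℕ × ℕ) : ℂ :=
  ((Wf p J : ℝ) : ℂ) * cexp (-(tauf t J))

lemma Wf_nonneg (p : ℕ) (J : ι → ℕ × ℕ) : 0 ≤ Wf p J :=
  Finset.prod_nonneg fun i _ => by positivity

lemma hbin (p : ℕ) (z : ℂ) :
    (1 + z)^p = ∑ a ∈ Finset.range (p+1), (p.choose a : ℂ) * z^a := by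
  rw [add_comm, add_pow]
  refine Finset.sum_congr rfl fun a ha => ?_
  simp
  ring

lemma hfac (p : ℕ) (x : ℝ) :
    (1 + cexp x)^p * (1 + cexp (-x))^p
      = ∑ ab ∈ Finset.range (p+1) ×ˢ Finset.range (p+1),
          ((p.choose ab.1 : ℂ) * (p.choose ab.2 : ℂ)) * ((cexp x)^ab.1 * (cexp (-x))^ab.2) := by
  rw [hbin, hbin, Finset.sum_mul_sum, Finset.sum_product]
  refine Finset.sum_congr rfl fun a ha => ?_
  refine Finset.sum_congr rfl fun b hb => ?_
  ring

lemma expand (δ t : ι → ℝ) (p : ℕ) (n : ℕ) :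
    (((4:ℝ)^(p * Fintype.card ι) * phi δ t p n : ℝ) : ℂ)
      = ∑ J ∈ Fintype.piFinset (fun _ : ι => Finset.range (p+1) ×ˢ Finset.range (p+1)),
          coeff t p J * (cexp (betaf δ J))^n := by
  have hL : (((4:ℝ)^(p * Fintype.card ι) * phi δ t p n : ℝ) : ℂ)
      = ∏ i, ((1 + cexp ((n:ℝ) * δ i - t i)) * (1 + cexp (-((n:ℝ) * δ i - t i))))^p := by
    have h1 : ∀ i : ι, ((1 + cexp ((n:ℝ) * δ i - t i)) * (1 + cexp (-((n:ℝ) * δ i - t i))))^p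
        = (((gfun ((n:ℝ) * δ i - t i) * 4)^p : ℝ) : ℂ) := by
      intro i
      rw [cexp_gfun, ← Complex.ofReal_pow]
    rw [Finset.prod_congr rfl fun i _ => h1 i, ← Complex.ofReal_prod]
    congr 1
    rw [phi]
    rw [Finset.prod_congr rfl (fun i (_ : i ∈ Finset.univ) => mul_pow (gfun ((n:ℝ) * δ i - t i)) 4 p)]
    rw [Finset.prod_mul_distrib, Finset.prod_const, Finset.card_univ, ← pow_mul]
    ring
  rw [hL]
  rw [Finset.prod_congr rfl fun i (_ : i ∈ Finset.univ) =>
    mul_pow (1 + cexp ((n:ℝ) * δ i - t i)) (1 + cexp (-((n:ℝ) * δ i - t i))) p]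
  rw [Finset.prod_congr rfl fun i (_ : i ∈ Finset.univ) => hfac p ((n:ℝ) * δ i - t i)]
  rw [Finset.prod_univ_sum]
  refine Finset.sum_congr rfl fun J hJ => ?_
  rw [Finset.prod_mul_distrib]
  have hWc : (∏ i, ((p.choose (J i).1 : ℂ) * (p.choose (J i).2 : ℂ))) = ((Wf p J : ℝ) : ℂ) := by
    rw [Wf]
    push_cast
    rfl
  have hprod : (∏ i, ((cexp ((n:ℝ) * δ i - t i))^(J i).1 * (cexp (-((n:ℝ) * δ i - t i)))^(J i).2))
      = cexp ((n:ℝ) * betaf δ J - tauf t J) := by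
    have h2 : ∀ i : ι, (cexp ((n:ℝ) * δ i - t i))^(J i).1 * (cexp (-((n:ℝ) * δ i - t i)))^(J i).2
        = cexp ((kkf J i : ℝ) * ((n:ℝ) * δ i - t i)) := by
      intro i
      rw [← cexp_nat_mul, ← cexp_nat_mul, ← cexp_add]
      congr 1
      rw [kkf]
      push_cast
      ring
    rw [Finset.prod_congr rfl fun i _ => h2 i, ← cexp_sum]
    congr 1
    rw [betaf, tauf, Finset.mul_sum, ← Finset.sum_sub_distrib]
    refine Finset.sum_congr rfl fun i _ => by ring
  rw [hWc, hprod]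
  have heq : (n:ℝ) * betaf δ J - tauf t J = -(tauf t J) + (n:ℝ) * betaf δ J := by ring
  rw [heq, cexp_add, cexp_nat_mul]
  rw [coeff]
  ring

lemma phi_nonneg (δ t : ι → ℝ) (p n : ℕ) : 0 ≤ phi δ t p n :=
  Finset.prod_nonneg fun i _ => pow_nonneg (gfun_nonneg _) _

lemma phi_le_one (δ t : ι → ℝ) (p n : ℕ) : phi δ t p n ≤ 1 :=
  Finset.prod_le_one (fun i _ => pow_nonneg (gfun_nonneg _) _)
    (fun i _ => pow_le_one₀ (gfun_nonneg _) (gfun_le_one _))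

open Real in
lemma kron (δ t : ι → ℝ)
    (hδ : ∀ k : ι → ℤ, (∃ i, k i ≠ 0) → ∀ c : ℤ, (∑ i, (k i : ℝ) * δ i) ≠ (c:ℝ))
    (ε : ℝ) (hε : 0 < ε) (N₀ : ℕ) :
    ∃ n : ℕ, N₀ ≤ n ∧ ∀ i, nintDist ((n:ℝ) * δ i - t i) < ε := by
  classical
  obtain ⟨c, hc0, hc1, hcc⟩ := cos_close ε hε
  set M : ℕ := Fintype.card ι with hM
  set r : ℝ := 1 - c/2 with hrdef
  have hr0 : (0:ℝ) < r := by rw [hrdef]; linarith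
  have hr1 : r < 1 := by rw [hrdef]; linarith
  have htend : Filter.Tendsto (fun n : ℕ => (n:ℝ)^(2*M) * r^n) Filter.atTop (nhds 0) :=
    (summable_pow_mul_geometric_of_norm_lt_one (R := ℝ) (2*M)
      (by rw [Real.norm_eq_abs, abs_of_pos hr0]; exact hr1)).tendsto_atTop_zero
  obtain ⟨q0, hq0⟩ := Filter.eventually_atTop.mp
    (htend.eventually (gt_mem_nhds (by positivity : (0:ℝ) < r/4)))
  set p : ℕ := q0 with hpdef
  have hp1 : (((p+1:ℕ)):ℝ)^(2*M) * r^(p+1) < r/4 := hq0 (p+1) (Nat.le_succ _)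
  have hpm : (((p+1:ℕ)):ℝ)^(2*M) * r^p < 1/4 := by
    have h4 : (((p+1:ℕ)):ℝ)^(2*M) * r^p * r < (1/4) * r := by
      calc (((p+1:ℕ)):ℝ)^(2*M) * r^p * r = (((p+1:ℕ)):ℝ)^(2*M) * r^(p+1) := by ring
      _ < r/4 := hp1
      _ = (1/4)*r := by ring
    exact lt_of_mul_lt_mul_right h4 (le_of_lt hr0)
  set SS := Fintype.piFinset (fun _ : ι => Finset.range (p+1) ×ˢ Finset.range (p+1)) with hSS
  set J₀ : ι → ℕ × ℕ := fun _ => (p/2, p/2) with hJ₀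
  have hJ₀S : J₀ ∈ SS := by
    rw [hSS, Fintype.mem_piFinset]
    intro i
    simp only [hJ₀, Finset.mem_product, Finset.mem_range]
    exact ⟨Nat.lt_succ_of_le (Nat.div_le_self _ _), Nat.lt_succ_of_le (Nat.div_le_self _ _)⟩
  set w₀ : ℝ := Wf p J₀ with hw₀
  have hw0val : w₀ = ((p.choose (p/2) : ℝ) * (p.choose (p/2) : ℝ))^M := by
    rw [hw₀, Wf]
    simp only [hJ₀]
    rw [Finset.prod_const, Finset.card_univ, hM]
  have hchoosepos : 0 < (p.choose (p/2) : ℝ) := by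
    exact_mod_cast Nat.choose_pos (Nat.div_le_self _ _)
  have hw0pos : 0 < w₀ := by rw [hw0val]; positivity
  have hw0ge : (4:ℝ)^(p*M) ≤ w₀ * (((p+1:ℕ)):ℝ)^(2*M) := by
    have hnat : (2:ℕ)^p ≤ (p+1) * p.choose (p/2) := by
      calc (2:ℕ)^p = ∑ m ∈ Finset.range (p+1), p.choose m := (Nat.sum_range_choose p).symm
      _ ≤ (p+1) * p.choose (p/2) := by
          have := Finset.sum_le_card_nsmul (Finset.range (p+1)) (fun m => p.choose m)
            (p.choose (p/2)) (fun m _ => Nat.choose_le_middle m p)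
          simpa [Finset.card_range, smul_eq_mul] using this
    have hreal : (2:ℝ)^p ≤ ((p+1:ℕ):ℝ) * (p.choose (p/2) : ℝ) := by exact_mod_cast hnat
    have h2 : ((2:ℝ)^p)^(2*M) ≤ (((p+1:ℕ):ℝ) * (p.choose (p/2) : ℝ))^(2*M) :=
      pow_le_pow_left₀ (by positivity) hreal _
    calc (4:ℝ)^(p*M) = ((2:ℝ)^p)^(2*M) := by
          rw [show (4:ℝ) = 2^2 by norm_num, ← pow_mul, ← pow_mul]
          congr 1
          ring
    _ ≤ (((p+1:ℕ):ℝ) * (p.choose (p/2) : ℝ))^(2*M) := h2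
    _ = w₀ * (((p+1:ℕ)):ℝ)^(2*M) := by
          rw [mul_pow, hw0val]
          rw [show 2*M = M*2 by ring, pow_mul, pow_mul]
          ring_nf
  set CC : ℝ := ∑ J ∈ SS.filter (fun J => ¬ ∀ i, (J i).1 = (J i).2),
      ‖coeff t p J‖ * (2 / ‖1 - cexp (betaf δ J)‖) with hCC
  have hCC0 : 0 ≤ CC := Finset.sum_nonneg fun J _ => by positivity
  have main : ∀ N : ℕ, (N:ℝ) * w₀ - CC ≤ (4:ℝ)^(p*M) * ∑ n ∈ Finset.range N, phi δ t p n := by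
    intro N
    have hsum : (((4:ℝ)^(p*M) * ∑ n ∈ Finset.range N, phi δ t p n : ℝ) : ℂ)
        = ∑ J ∈ SS, coeff t p J * (∑ n ∈ Finset.range N, (cexp (betaf δ J))^n) := by
      calc (((4:ℝ)^(p*M) * ∑ n ∈ Finset.range N, phi δ t p n : ℝ) : ℂ)
          = ∑ n ∈ Finset.range N, (((4:ℝ)^(p*M) * phi δ t p n : ℝ) : ℂ) := by
            rw [Finset.mul_sum]
            push_cast
            rfl
        _ = ∑ n ∈ Finset.range N, ∑ J ∈ SS, coeff t p J * (cexp (betaf δ J))^n := by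
            refine Finset.sum_congr rfl fun n _ => ?_
            exact expand δ t p n
        _ = ∑ J ∈ SS, ∑ n ∈ Finset.range N, coeff t p J * (cexp (betaf δ J))^n := Finset.sum_comm
        _ = ∑ J ∈ SS, coeff t p J * ∑ n ∈ Finset.range N, (cexp (betaf δ J))^n := by
            refine Finset.sum_congr rfl fun J _ => (Finset.mul_sum _ _ _).symm
    have hre : (4:ℝ)^(p*M) * ∑ n ∈ Finset.range N, phi δ t p n
        = ∑ J ∈ SS, (coeff t p J * ∑ n ∈ Finset.range N, (cexp (betaf δ J))^n).re := by
      have := congrArg Complex.re hsum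
      rw [Complex.ofReal_re] at this
      rw [this, Complex.re_sum]
    rw [hre, ← Finset.sum_filter_add_sum_filter_not SS (fun J => ∀ i, (J i).1 = (J i).2)]
    have hdiagval : ∀ J ∈ SS.filter (fun J => ∀ i, (J i).1 = (J i).2),
        (coeff t p J * ∑ n ∈ Finset.range N, (cexp (betaf δ J))^n).re = Wf p J * N := by
      intro J hJ
      obtain ⟨hJS, hJd⟩ := Finset.mem_filter.mp hJ
      have hk0 : ∀ i, kkf J i = 0 := by
        intro i
        rw [kkf, hJd i]
        ring
      have hβ0 : betaf δ J = 0 := by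
        rw [betaf]
        apply Finset.sum_eq_zero
        intro i _
        rw [hk0 i]
        simp
      have hτ0 : tauf t J = 0 := by
        rw [tauf]
        apply Finset.sum_eq_zero
        intro i _
        rw [hk0 i]
        simp
      rw [hβ0, coeff, hτ0]
      simp [cexp_zero]
    have hdiaglb : (N:ℝ) * w₀ ≤ ∑ J ∈ SS.filter (fun J => ∀ i, (J i).1 = (J i).2),
        (coeff t p J * ∑ n ∈ Finset.range N, (cexp (betaf δ J))^n).re := by
      rw [Finset.sum_congr rfl hdiagval]
      have hJ₀D : J₀ ∈ SS.filter (fun J => ∀ i, (J i).1 = (J i).2) :=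
        Finset.mem_filter.mpr ⟨hJ₀S, fun i => rfl⟩
      have := Finset.single_le_sum (f := fun J => Wf p J * N)
        (fun J _ => mul_nonneg (Wf_nonneg p J) (Nat.cast_nonneg N)) hJ₀D
      calc (N:ℝ) * w₀ = Wf p J₀ * N := by rw [hw₀]; ring
      _ ≤ _ := this
    have hndlb : -CC ≤ ∑ J ∈ SS.filter (fun J => ¬ ∀ i, (J i).1 = (J i).2),
        (coeff t p J * ∑ n ∈ Finset.range N, (cexp (betaf δ J))^n).re := by
      rw [hCC, ← Finset.sum_neg_distrib]
      apply Finset.sum_le_sum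
      intro J hJ
      obtain ⟨hJS, hJd⟩ := Finset.mem_filter.mp hJ
      have hne1 : cexp (betaf δ J) ≠ 1 := by
        intro h1
        obtain ⟨m, hm⟩ := cexp_eq_one _ h1
        push_neg at hJd
        obtain ⟨i0, hi0⟩ := hJd
        have hex : ∃ i, kkf J i ≠ 0 := by
          refine ⟨i0, ?_⟩
          rw [kkf]
          intro hcontra
          apply hi0
          omega
        exact hδ (kkf J) hex m (by rw [← betaf]; exact hm)
      have hne0 : (1 : ℂ) - cexp (betaf δ J) ≠ 0 := by
        intro hcontra
        apply hne1
        have := sub_eq_zero.mp hcontra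
        exact this.symm
      have hdenpos : 0 < ‖1 - cexp (betaf δ J)‖ := by
        rw [norm_pos_iff]
        exact hne0
      have habs : ‖∑ n ∈ Finset.range N, (cexp (betaf δ J))^n‖
          ≤ 2 / ‖1 - cexp (betaf δ J)‖ := by
        rw [geom_sum_eq hne1, norm_div]
        have hnum : ‖(cexp (betaf δ J))^N - 1‖ ≤ 2 := by
          calc ‖(cexp (betaf δ J))^N - 1‖
              ≤ ‖(cexp (betaf δ J))^N‖ + ‖(1:ℂ)‖ := norm_sub_le _ _
          _ = 2 := by
                rw [norm_pow, cexp_abs, one_pow, norm_one]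
                norm_num
        have hden : ‖cexp (betaf δ J) - 1‖ = ‖1 - cexp (betaf δ J)‖ :=
          norm_sub_rev _ _
        rw [hden]
        exact (div_le_div_iff_of_pos_right hdenpos).mpr hnum
      have hrege : -(‖coeff t p J‖ * (2 / ‖1 - cexp (betaf δ J)‖))
          ≤ (coeff t p J * ∑ n ∈ Finset.range N, (cexp (betaf δ J))^n).re := by
        have h1 : ‖coeff t p J * ∑ n ∈ Finset.range N, (cexp (betaf δ J))^n‖
            ≤ ‖coeff t p J‖ * (2 / ‖1 - cexp (betaf δ J)‖) := by
          rw [norm_mul]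
          exact mul_le_mul_of_nonneg_left habs (norm_nonneg _)
        have h2 := Complex.abs_re_le_norm (coeff t p J * ∑ n ∈ Finset.range N, (cexp (betaf δ J))^n)
        have h3 := neg_abs_le ((coeff t p J * ∑ n ∈ Finset.range N, (cexp (betaf δ J))^n).re)
        linarith [abs_nonneg ((coeff t p J * ∑ n ∈ Finset.range N, (cexp (betaf δ J))^n).re)]
      exact hrege
    linarith
  by_contra hcon
  push_neg at hcon
  have hφsmall : ∀ n : ℕ, N₀ ≤ n → phi δ t p n ≤ r^p := by
    intro n hn
    obtain ⟨i, hi⟩ := hcon n hn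
    have hgle : gfun ((n:ℝ) * δ i - t i) ≤ r := by
      by_contra hgt
      push_neg at hgt
      have hlt : nintDist ((n:ℝ)*δ i - t i) < ε := by
        apply hcc
        rw [gfun] at hgt
        rw [hrdef] at hgt
        linarith
      linarith
    calc phi δ t p n
        = (gfun ((n:ℝ)*δ i - t i))^p * ∏ j ∈ Finset.univ.erase i, (gfun ((n:ℝ)*δ j - t j))^p := by
          rw [phi]
          exact (Finset.mul_prod_erase Finset.univ
            (fun j => (gfun ((n:ℝ)*δ j - t j))^p) (Finset.mem_univ i)).symm
    _ ≤ r^p * 1 := by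
        apply mul_le_mul
        · exact pow_le_pow_left₀ (gfun_nonneg _) hgle p
        · exact Finset.prod_le_one (fun j _ => pow_nonneg (gfun_nonneg _) _)
            (fun j _ => pow_le_one₀ (gfun_nonneg _) (gfun_le_one _))
        · exact Finset.prod_nonneg (fun j _ => pow_nonneg (gfun_nonneg _) _)
        · positivity
    _ = r^p := mul_one _
  have hrpw : (4:ℝ)^(p*M) * r^p ≤ w₀ / 4 := by
    calc (4:ℝ)^(p*M) * r^p ≤ (w₀ * (((p+1:ℕ)):ℝ)^(2*M)) * r^p :=
          mul_le_mul_of_nonneg_right hw0ge (by positivity)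
    _ = w₀ * ((((p+1:ℕ)):ℝ)^(2*M) * r^p) := by ring
    _ ≤ w₀ * (1/4) := mul_le_mul_of_nonneg_left (le_of_lt hpm) (le_of_lt hw0pos)
    _ = w₀/4 := by ring
  have hfinal : ∀ N : ℕ, N₀ ≤ N → (N:ℝ) * (3/4 * w₀) ≤ (4:ℝ)^(p*M) * (N₀:ℝ) + CC := by
    intro N hN
    have h1 := main N
    have h2 : ∑ n ∈ Finset.range N, phi δ t p n ≤ (N₀:ℝ) + (N:ℝ)*r^p := by
      rw [Finset.range_eq_Ico, ← Finset.sum_Ico_consecutive _ (Nat.zero_le N₀) hN]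
      have hA : ∑ n ∈ Finset.Ico 0 N₀, phi δ t p n ≤ (N₀:ℝ) := by
        calc ∑ n ∈ Finset.Ico 0 N₀, phi δ t p n ≤ ∑ n ∈ Finset.Ico 0 N₀, 1 :=
              Finset.sum_le_sum (fun n _ => phi_le_one δ t p n)
        _ = (N₀:ℝ) := by simp
      have hB : ∑ n ∈ Finset.Ico N₀ N, phi δ t p n ≤ (N:ℝ) * r^p := by
        calc ∑ n ∈ Finset.Ico N₀ N, phi δ t p n ≤ ∑ n ∈ Finset.Ico N₀ N, r^p :=
              Finset.sum_le_sum (fun n hn => hφsmall n (Finset.mem_Ico.mp hn).1)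
        _ = ((N - N₀:ℕ):ℝ) * r^p := by rw [Finset.sum_const, Nat.card_Ico]; simp [nsmul_eq_mul]
        _ ≤ (N:ℝ)*r^p := by
            apply mul_le_mul_of_nonneg_right _ (by positivity)
            exact_mod_cast Nat.sub_le N N₀
      linarith
    have h3 : (4:ℝ)^(p*M) * ∑ n ∈ Finset.range N, phi δ t p n
        ≤ (4:ℝ)^(p*M) * (N₀:ℝ) + (N:ℝ) * (w₀/4) := by
      calc (4:ℝ)^(p*M) * ∑ n ∈ Finset.range N, phi δ t p n
          ≤ (4:ℝ)^(p*M) * ((N₀:ℝ) + (N:ℝ)*r^p) := by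
            apply mul_le_mul_of_nonneg_left h2 (by positivity)
      _ = (4:ℝ)^(p*M) * (N₀:ℝ) + (N:ℝ) * ((4:ℝ)^(p*M) * r^p) := by ring
      _ ≤ (4:ℝ)^(p*M) * (N₀:ℝ) + (N:ℝ) * (w₀/4) := by
            have := mul_le_mul_of_nonneg_left hrpw (Nat.cast_nonneg N : (0:ℝ) ≤ N)
            linarith
    nlinarith [h1, h3]
  obtain ⟨N', hN'⟩ := exists_nat_gt (((4:ℝ)^(p*M) * (N₀:ℝ) + CC) / (3/4 * w₀))
  have hNge : N₀ ≤ N' + N₀ := Nat.le_add_left _ _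
  have hcontr := hfinal (N' + N₀) hNge
  have hNbig : (((N' + N₀:ℕ)):ℝ) > ((4:ℝ)^(p*M) * (N₀:ℝ) + CC) / (3/4 * w₀) := by
    push_cast
    have : (0:ℝ) ≤ (N₀:ℝ) := Nat.cast_nonneg _
    linarith
  have hpos : (0:ℝ) < 3/4 * w₀ := by linarith
  rw [gt_iff_lt, div_lt_iff₀ hpos] at hNbig
  linarith

lemma step {P : Set ℝ} (hP : Perfect P) {p₀ : ℝ} (hp₀ : p₀ ∈ P)
    (α ε : ℝ) (hα : 0 < α) (hε : 0 < ε) (N₀ : ℕ) :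
    ∃ N : ℕ, N₀ < N ∧ ∀ q ∈ P ∩ Metric.closedBall p₀ 1, ∀ θ : ℝ,
      ∃ z ∈ P, |z - q| < α ∧ nintDist ((N:ℝ) * z - θ) < ε := by
  classical
  obtain ⟨m', hm'⟩ := exists_nat_one_div_lt (show (0:ℝ) < ε/4 by linarith)
  set m : ℕ := m' + 1 with hmdef
  have hm0 : 0 < m := Nat.succ_pos _
  have hm0R : (0:ℝ) < m := by exact_mod_cast hm0
  have hm : (1:ℝ)/m < ε/4 := by
    have : ((m':ℕ):ℝ) + 1 = (m:ℝ) := by rw [hmdef]; push_cast; ring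
    rwa [this] at hm'
  have hKc : IsCompact (P ∩ Metric.closedBall p₀ 1) :=
    (isCompact_closedBall p₀ 1).inter_left hP.closed
  have hcover : (P ∩ Metric.closedBall p₀ 1)
      ⊆ ⋃ q ∈ (P ∩ Metric.closedBall p₀ 1), Metric.ball q (α/4) := by
    intro q hq
    exact Set.mem_biUnion hq (Metric.mem_ball_self (by linarith))
  obtain ⟨T, hTK, hTfin, hTcov⟩ := hKc.elim_finite_subcover_image
    (fun q _ => Metric.isOpen_ball) hcover
  set TF : Finset ℝ := hTfin.toFinset with hTF
  have hTFP : ∀ y : {y // y ∈ TF}, (y : ℝ) ∈ P := by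
    intro y
    exact (hTK (hTfin.mem_toFinset.mp y.2)).1
  set nn : ℕ := Fintype.card ({y // y ∈ TF} × Fin (m+1)) with hnn
  set e := Fintype.equivFin ({y // y ∈ TF} × Fin (m+1)) with he
  set U' : Fin nn → Set ℝ := fun l => P ∩ Metric.ball (((e.symm l).1 : ℝ)) (α/4) with hU'
  have hU'unc : ∀ l, ¬ (U' l).Countable := by
    intro l
    exact portion_uncountable hP (hTFP (e.symm l).1) (by linarith)
  obtain ⟨x', hx'mem, hindep⟩ := seq_indep nn U' hU'unc
  set x : ({y // y ∈ TF} × Fin (m+1)) → ℝ := fun a => x' (e a) with hx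
  have hxmem : ∀ a : ({y // y ∈ TF} × Fin (m+1)),
      x a ∈ P ∩ Metric.ball ((a.1 : ℝ)) (α/4) := by
    intro a
    have := hx'mem (e a)
    rw [hU'] at this
    simpa [hx, Equiv.symm_apply_apply] using this
  have hindep2 : ∀ (k : ({y // y ∈ TF} × Fin (m+1)) → ℤ) (cz : ℤ),
      (∑ a, (k a : ℝ) * x a) + (cz:ℝ) = 0 → ∀ a, k a = 0 := by
    intro k cz h a
    have hsum : ∑ l : Fin nn, ((k (e.symm l) : ℝ) * x' l) = ∑ a, (k a : ℝ) * x a := by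
      rw [← Equiv.sum_comp e.symm (fun a => (k a : ℝ) * x a)]
      refine Finset.sum_congr rfl fun l _ => ?_
      rw [hx]
      simp [Equiv.apply_symm_apply]
    have h' : (∑ l : Fin nn, ((fun l => k (e.symm l)) l : ℝ) * x' l) + (cz:ℝ) = 0 := by
      rw [hsum]; exact h
    have := hindep (fun l => k (e.symm l)) cz h' (e a)
    simpa [Equiv.symm_apply_apply] using this
  set δf : ({y // y ∈ TF} × Fin m) → ℝ := fun b => x (b.1, b.2.succ) - x (b.1, 0) with hδf
  set tf : ({y // y ∈ TF} × Fin m) → ℝ := fun b => (((b.2 : ℕ) + 1 : ℕ) : ℝ)/m with htf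
  have hkhyp : ∀ k : ({y // y ∈ TF} × Fin m) → ℤ, (∃ b, k b ≠ 0) → ∀ cz : ℤ,
      (∑ b, (k b : ℝ) * δf b) ≠ (cz:ℝ) := by
    intro k hkne cz heq
    set k' : ({y // y ∈ TF} × Fin (m+1)) → ℤ := fun a =>
      if h : a.2 = 0 then -(∑ j : Fin m, k (a.1, j)) else k (a.1, a.2.pred h) with hk'
    have hsum2 : ∑ a, (k' a : ℝ) * x a = ∑ b, (k b : ℝ) * δf b := by
      rw [Fintype.sum_prod_type, Fintype.sum_prod_type]
      refine Finset.sum_congr rfl fun i _ => ?_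
      rw [Fin.sum_univ_succ]
      have h0 : k' (i, 0) = -(∑ j : Fin m, k (i, j)) := by rw [hk']; simp
      have hs : ∀ j : Fin m, k' (i, j.succ) = k (i, j) := by
        intro j
        rw [hk']
        simp [Fin.succ_ne_zero]
      simp only [h0, hs, hδf]
      push_cast
      simp only [mul_sub]
      rw [Finset.sum_sub_distrib, ← Finset.sum_mul]
      ring
    have hfull : (∑ a, (k' a : ℝ) * x a) + (-cz : ℤ) = 0 := by
      rw [hsum2, heq]
      push_cast
      ring
    obtain ⟨b, hb⟩ := hkne
    have := hindep2 k' (-cz) (by exact_mod_cast hfull) (b.1, b.2.succ)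
    rw [hk'] at this
    simp [Fin.succ_ne_zero, Fin.pred_succ] at this
    exact hb this
  obtain ⟨N, hNge, hNap⟩ := kron δf tf hkhyp (ε/4) (by linarith) (N₀+1)
  refine ⟨N, by omega, ?_⟩
  intro q hq θ
  obtain ⟨cc, hccT, hqball⟩ := Set.mem_iUnion₂.mp (hTcov hq)
  have hccTF : cc ∈ TF := by rw [hTF, Set.Finite.mem_toFinset]; exact hccT
  set i : {y // y ∈ TF} := ⟨cc, hccTF⟩ with hi
  set v : ℝ := (N:ℝ) * x (i, 0) - θ with hv
  set f : ℝ := Int.fract (-v) with hf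
  have hf0 : 0 ≤ f := Int.fract_nonneg _
  have hf1 : f < 1 := Int.fract_lt_one _
  set jn : ℕ := ⌊f * m⌋₊ with hjn
  have hjnm : jn < m := by
    rw [hjn]
    rw [Nat.floor_lt (by positivity)]
    calc f * m < 1 * m := by apply mul_lt_mul_of_pos_right hf1 hm0R
    _ = m := one_mul _
  have hjle : (jn:ℝ)/m ≤ f := by
    rw [div_le_iff₀ hm0R]
    exact Nat.floor_le (by positivity)
  have hjgt : f - (jn:ℝ)/m < 1/m := by
    have h1 : f * m < (jn:ℝ) + 1 := by
      have := Nat.lt_floor_add_one (f * m)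
      rw [hjn]
      exact_mod_cast this
    have h2 : f < ((jn:ℝ) + 1)/m := by rw [lt_div_iff₀ hm0R]; exact h1
    have h3 : ((jn:ℝ)+1)/m = (jn:ℝ)/m + 1/m := by ring
    linarith
  set jF : Fin (m+1) := ⟨jn, by omega⟩ with hjF
  set z : ℝ := x (i, jF) with hz
  have hzP : z ∈ P := (hxmem (i, jF)).1
  have hzb : |z - cc| < α/4 := by
    have := (hxmem (i, jF)).2
    rwa [Metric.mem_ball, Real.dist_eq] at this
  have hqb : |q - cc| < α/4 := by rwa [Metric.mem_ball, Real.dist_eq] at hqball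
  refine ⟨z, hzP, ?_, ?_⟩
  · calc |z - q| = |(z - cc) + (cc - q)| := by ring_nf
    _ ≤ |z - cc| + |cc - q| := abs_add_le _ _
    _ < α/4 + α/4 := by
        rw [abs_sub_comm cc q]
        linarith
    _ ≤ α := by linarith
  · have hd : nintDist ((N:ℝ) * (z - x (i, 0)) - (jn:ℝ)/m) < ε/4 := by
      rcases Nat.eq_zero_or_pos jn with h0 | hpos
      · have hj0 : jF = 0 := by
          rw [hjF]
          exact Fin.ext (by simp [h0])
        rw [hz, hj0, h0]
        have hzero : (N:ℝ) * (x (i, 0) - x (i, 0)) - ((0:ℕ):ℝ)/m = 0 := by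
          push_cast
          ring
        rw [hzero]
        have : nintDist 0 = 0 := by simp [nintDist]
        rw [this]
        linarith
      · set jj : Fin m := ⟨jn - 1, by omega⟩ with hjj
        have hsucc : jF = jj.succ := by
          apply Fin.ext
          simp [hjF, hjj, Fin.val_succ]
          omega
        have hthis := hNap (i, jj)
        simp only [hδf, htf] at hthis
        have hjval : (((jj : ℕ) + 1 : ℕ) : ℝ) = (jn : ℝ) := by
          have hjv : ((jj : ℕ) + 1 : ℕ) = jn := by simp [hjj]; omega
          exact_mod_cast congrArg (Nat.cast (R := ℝ)) hjv
        rw [hjval] at hthis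
        rw [hz, hsucc]
        exact hthis
    have hv2 : nintDist (v + (jn:ℝ)/m) < ε/4 := by
      have hveq : v + (jn:ℝ)/m = -(f - (jn:ℝ)/m) + ((-⌊-v⌋ : ℤ) : ℝ) := by
        rw [hf, Int.fract]
        push_cast
        ring
      rw [hveq, nintDist_add_int, nintDist_neg]
      calc nintDist (f - (jn:ℝ)/m) ≤ |f - (jn:ℝ)/m| := nintDist_le_abs _
      _ = f - (jn:ℝ)/m := abs_of_nonneg (by linarith)
      _ < 1/m := hjgt
      _ < ε/4 := hm
    have hsplit : (N:ℝ) * z - θ = (v + (jn:ℝ)/m) + ((N:ℝ) * (z - x (i, 0)) - (jn:ℝ)/m) := by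
      rw [hv]
      ring
    calc nintDist ((N:ℝ) * z - θ)
        = nintDist ((v + (jn:ℝ)/m) + ((N:ℝ) * (z - x (i, 0)) - (jn:ℝ)/m)) := by rw [← hsplit]
    _ ≤ nintDist (v + (jn:ℝ)/m) + nintDist ((N:ℝ) * (z - x (i, 0)) - (jn:ℝ)/m) :=
        nintDist_add_le _ _
    _ < ε/4 + ε/4 := by linarith
    _ ≤ ε := by linarith
end EKM

theorem stmt0 (P : Set ℝ) (hP : Perfect P) (hne : P.Nonempty) :
    ∃ D : Set ℝ, IsDirichlet D ∧ P + D = Set.univ := by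
  classical
  obtain ⟨p₀, hp₀⟩ := hne
  have hstep' : ∀ (k : ℕ) (s : ℕ × ℝ), ∃ s' : ℕ × ℝ,
      s'.2 = min (s.2/2) ((1/2:ℝ)^(k+4)/((s.1:ℝ)+1)) ∧ s.1 < s'.1 ∧
      (0 < s.2 → ∀ q ∈ P ∩ Metric.closedBall p₀ 1, ∀ θ : ℝ,
        ∃ z ∈ P, |z - q| < s'.2 ∧ nintDist ((s'.1:ℝ) * z - θ) < (1/2:ℝ)^(k+3)) := by
    intro k s
    by_cases hpos : 0 < s.2
    · have hα' : 0 < min (s.2/2) ((1/2:ℝ)^(k+4)/((s.1:ℝ)+1)) := by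
        apply lt_min (by linarith) (by positivity)
      obtain ⟨N, hN1, hN2⟩ := EKM.step hP hp₀ _ ((1/2:ℝ)^(k+3)) hα' (by positivity) s.1
      exact ⟨(N, min (s.2/2) ((1/2:ℝ)^(k+4)/((s.1:ℝ)+1))), rfl, hN1, fun _ => hN2⟩
    · exact ⟨(s.1+1, min (s.2/2) ((1/2:ℝ)^(k+4)/((s.1:ℝ)+1))), rfl, Nat.lt_succ_self _,
        fun h => absurd h hpos⟩
  choose G hG1 hG2 hG3 using hstep'
  obtain ⟨N0, hN0a, hN0b⟩ := EKM.step hP hp₀ ((1/2:ℝ)^3) ((1/2:ℝ)^2)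
    (by norm_num) (by norm_num) 0
  set F : ℕ → ℕ × ℝ := fun k => Nat.rec ((N0, (1/2:ℝ)^3)) (fun k ih => G k ih) k with hF
  have hF0 : F 0 = (N0, (1/2:ℝ)^3) := rfl
  have hFs : ∀ k, F (k+1) = G k (F k) := fun k => rfl
  set Nf : ℕ → ℕ := fun k => (F k).1 with hNf
  set αf : ℕ → ℝ := fun k => (F k).2 with hαf
  have hα0 : αf 0 = (1/2:ℝ)^3 := rfl
  have hα_eq : ∀ k, αf (k+1) = min (αf k/2) ((1/2:ℝ)^(k+4)/((Nf k:ℝ)+1)) := by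
    intro k
    show (F (k+1)).2 = _
    rw [hFs k]
    exact hG1 k (F k)
  have hαpos : ∀ k, 0 < αf k := by
    intro k
    induction k with
    | zero => rw [hα0]; norm_num
    | succ k ih =>
      rw [hα_eq k]
      exact lt_min (by linarith) (by positivity)
  have hαle : ∀ k, αf k ≤ (1/2:ℝ)^(k+3) := by
    intro k
    induction k with
    | zero => rw [hα0]
    | succ k ih =>
      rw [hα_eq k]
      calc min (αf k/2) ((1/2:ℝ)^(k+4)/((Nf k:ℝ)+1)) ≤ αf k / 2 := min_le_left _ _
      _ ≤ (1/2:ℝ)^(k+3)/2 := by linarith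
      _ = (1/2:ℝ)^(k+1+3) := by ring
  have hαhalf : ∀ k, αf (k+1) ≤ αf k / 2 := fun k => by
    rw [hα_eq k]; exact min_le_left _ _
  have hαgrid : ∀ k, αf (k+1) ≤ (1/2:ℝ)^(k+4)/((Nf k:ℝ)+1) := fun k => by
    rw [hα_eq k]; exact min_le_right _ _
  have hNmono : StrictMono Nf := by
    apply strictMono_nat_of_lt_succ
    intro k
    show (F k).1 < (F (k+1)).1
    rw [hFs k]
    exact hG2 k (F k)
  have hGood : ∀ k, ∀ q ∈ P ∩ Metric.closedBall p₀ 1, ∀ θ : ℝ,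
      ∃ z ∈ P, |z - q| < αf k ∧ nintDist ((Nf k:ℝ) * z - θ) < (1/2:ℝ)^(k+2) := by
    intro k
    cases k with
    | zero =>
      intro q hq θ
      obtain ⟨z, hz1, hz2, hz3⟩ := hN0b q hq θ
      refine ⟨z, hz1, ?_, ?_⟩
      · rw [hα0]; exact hz2
      · exact hz3
    | succ k =>
      have h := hG3 k (F k) (hαpos k)
      intro q hq θ
      obtain ⟨z, hz1, hz2, hz3⟩ := h q hq θ
      refine ⟨z, hz1, ?_, ?_⟩
      · show |z - q| < (F (k+1)).2
        rw [hFs k]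
        exact hz2
      · show nintDist (((F (k+1)).1 : ℝ) * z - θ) < (1/2:ℝ)^(k+1+2)
        rw [hFs k]
        exact hz3
  set D : Set ℝ := {x : ℝ | ∀ k : ℕ, nintDist ((Nf k : ℝ) * x) ≤ (1/2:ℝ)^k} with hD
  refine ⟨D, ⟨Nf, hNmono, fun x hx k => hx k⟩, ?_⟩
  apply Set.eq_univ_of_forall
  intro y
  have hzex : ∀ (k : ℕ) (q : ℝ), ∃ z : ℝ, q ∈ P ∩ Metric.closedBall p₀ 1 →
      (z ∈ P ∧ |z - q| < αf k ∧ nintDist ((Nf k:ℝ) * z - (Nf k:ℝ) * y) < (1/2:ℝ)^(k+2)) := by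
    intro k q
    by_cases hq : q ∈ P ∩ Metric.closedBall p₀ 1
    · obtain ⟨z, hz1, hz2, hz3⟩ := hGood k q hq ((Nf k:ℝ) * y)
      exact ⟨z, fun _ => ⟨hz1, hz2, hz3⟩⟩
    · exact ⟨p₀, fun h => absurd h hq⟩
  choose Z hZ using hzex
  set z : ℕ → ℝ := fun k => Nat.rec p₀ (fun k ih => Z k ih) k with hzdef
  have hz0 : z 0 = p₀ := rfl
  have hzs : ∀ k, z (k+1) = Z k (z k) := fun k => rfl
  have hzinv : ∀ k, z k ∈ P ∧ |z k - p₀| ≤ 1 - (1/2:ℝ)^k := by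
    intro k
    induction k with
    | zero =>
      rw [hz0]
      refine ⟨hp₀, ?_⟩
      norm_num
    | succ k ih =>
      have hmem : z k ∈ P ∩ Metric.closedBall p₀ 1 := by
        refine ⟨ih.1, ?_⟩
        rw [Metric.mem_closedBall, Real.dist_eq]
        have h2 := ih.2
        have hpow : (0:ℝ) ≤ (1/2:ℝ)^k := by positivity
        linarith
      obtain ⟨h1, h2, h3⟩ := hZ k (z k) hmem
      rw [hzs k]
      refine ⟨h1, ?_⟩
      have hle : (1/2:ℝ)^(k+3) ≤ (1/2:ℝ)^(k+1) :=
        pow_le_pow_of_le_one (by norm_num) (by norm_num) (by omega)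
      have h4 : |Z k (z k) - p₀| ≤ |Z k (z k) - z k| + |z k - p₀| := abs_sub_le _ _ _
      have h5 := hαle k
      have h6 : (1/2:ℝ)^(k+1) + (1/2:ℝ)^(k+1) = (1/2:ℝ)^k := by ring
      have h7 := ih.2
      have h8 : (1/2:ℝ)^(k+3) ≤ (1/2:ℝ)^(k+1) := hle
      have : |Z k (z k) - z k| < (1/2:ℝ)^(k+1) := by
        calc |Z k (z k) - z k| < αf k := h2
        _ ≤ (1/2:ℝ)^(k+3) := h5
        _ ≤ (1/2:ℝ)^(k+1) := h8
      linarith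
  have hzK : ∀ k, z k ∈ P ∩ Metric.closedBall p₀ 1 := by
    intro k
    refine ⟨(hzinv k).1, ?_⟩
    rw [Metric.mem_closedBall, Real.dist_eq]
    have := (hzinv k).2
    have hpow : (0:ℝ) ≤ (1/2:ℝ)^k := by positivity
    linarith
  have hzstep : ∀ k, dist (z k) (z (k+1)) ≤ αf k := by
    intro k
    have := (hZ k (z k) (hzK k)).2.1
    rw [hzs k, Real.dist_eq, abs_sub_comm]
    linarith
  have hzgeom : ∀ k, dist (z k) (z (k+1)) ≤ (1/8:ℝ) * (1/2:ℝ)^k := by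
    intro k
    calc dist (z k) (z (k+1)) ≤ αf k := hzstep k
    _ ≤ (1/2:ℝ)^(k+3) := hαle k
    _ = (1/8:ℝ) * (1/2:ℝ)^k := by ring
  have hcauchy : CauchySeq z := cauchySeq_of_le_geometric (1/2) (1/8) (by norm_num) hzgeom
  obtain ⟨p, hp⟩ := cauchySeq_tendsto_of_complete hcauchy
  have hpP : p ∈ P := hP.closed.mem_of_tendsto hp (Filter.Eventually.of_forall fun k => (hzinv k).1)
  have hαgeom : ∀ k j, αf (j + (k+1)) ≤ αf (k+1) * (1/2:ℝ)^j := by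
    intro k j
    induction j with
    | zero => simp
    | succ j ih =>
      have hidx : j + 1 + (k+1) = (j + (k+1)) + 1 := by omega
      rw [hidx]
      calc αf ((j + (k+1)) + 1) ≤ αf (j + (k+1)) / 2 := hαhalf _
      _ ≤ (αf (k+1) * (1/2:ℝ)^j) / 2 := by linarith
      _ = αf (k+1) * (1/2:ℝ)^(j+1) := by ring
  have htail : ∀ k, dist (z (k+1)) p ≤ 2 * αf (k+1) := by
    intro k
    set w : ℕ → ℝ := fun j => z (j + (k+1)) with hw
    have hwt : Filter.Tendsto w Filter.atTop (nhds p) := by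
      rw [hw]
      exact (Filter.tendsto_add_atTop_iff_nat (k+1)).mpr hp
    have hwstep : ∀ j, dist (w j) (w (j+1)) ≤ αf (k+1) * (1/2:ℝ)^j := by
      intro j
      have hidx : j + 1 + (k+1) = (j + (k+1)) + 1 := by omega
      have : dist (w j) (w (j+1)) = dist (z (j + (k+1))) (z ((j + (k+1)) + 1)) := by
        simp only [hw]
        rw [hidx]
      rw [this]
      calc dist (z (j + (k+1))) (z ((j + (k+1)) + 1)) ≤ αf (j + (k+1)) := hzstep (j + (k+1))
      _ ≤ αf (k+1) * (1/2:ℝ)^j := hαgeom k j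
    have hb := dist_le_of_le_geometric_of_tendsto₀ (1/2) (αf (k+1)) (by norm_num) hwstep hwt
    have hw0 : w 0 = z (k+1) := by rw [hw]; simp
    rw [hw0] at hb
    calc dist (z (k+1)) p ≤ αf (k+1) / (1 - 1/2) := hb
    _ = 2 * αf (k+1) := by ring
  have hdmem : (y - p) ∈ D := by
    simp only [hD, Set.mem_setOf_eq]
    intro k
    have h3 := (hZ k (z k) (hzK k)).2.2
    have hB : (Nf k:ℝ) * (y - p)
        = -((Nf k:ℝ) * (Z k (z k)) - (Nf k:ℝ) * y) + (Nf k:ℝ) * (Z k (z k) - p) := by ring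
    have hd1 : nintDist ((Nf k:ℝ) * (y - p))
        ≤ nintDist (-((Nf k:ℝ) * (Z k (z k)) - (Nf k:ℝ) * y))
          + |(Nf k:ℝ) * (Z k (z k) - p)| := by
      rw [hB]
      calc nintDist _ ≤ nintDist (-((Nf k:ℝ) * (Z k (z k)) - (Nf k:ℝ) * y))
            + nintDist ((Nf k:ℝ) * (Z k (z k) - p)) := EKM.nintDist_add_le _ _
      _ ≤ _ := by linarith [EKM.nintDist_le_abs ((Nf k:ℝ) * (Z k (z k) - p))]
    rw [EKM.nintDist_neg] at hd1
    have hd2 : |(Nf k:ℝ) * (Z k (z k) - p)| ≤ (Nf k:ℝ) * (2 * αf (k+1)) := by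
      rw [abs_mul, abs_of_nonneg (Nat.cast_nonneg _)]
      apply mul_le_mul_of_nonneg_left _ (Nat.cast_nonneg _)
      have := htail k
      rw [Real.dist_eq, hzs k] at this
      exact this
    have hd3 : (Nf k:ℝ) * (2 * αf (k+1)) ≤ (1/2:ℝ)^(k+3) := by
      have hg := hαgrid k
      have hden : (0:ℝ) < (Nf k:ℝ) + 1 := by positivity
      have h1 : (Nf k:ℝ) * (2 * αf (k+1)) ≤ (Nf k:ℝ) * (2 * ((1/2:ℝ)^(k+4)/((Nf k:ℝ)+1))) := by
        apply mul_le_mul_of_nonneg_left _ (Nat.cast_nonneg _)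
        linarith
      have h2 : (Nf k:ℝ) * (2 * ((1/2:ℝ)^(k+4)/((Nf k:ℝ)+1))) ≤ 2 * (1/2:ℝ)^(k+4) := by
        have hpow : (0:ℝ) < (1/2:ℝ)^(k+4) := by positivity
        have hcast : (0:ℝ) ≤ (Nf k:ℝ) := Nat.cast_nonneg _
        have key : (Nf k:ℝ) * (2 * ((1/2:ℝ)^(k+4)/((Nf k:ℝ)+1)))
            = 2 * (1/2:ℝ)^(k+4) * ((Nf k:ℝ)/((Nf k:ℝ)+1)) := by ring
        rw [key]
        have hq : (Nf k:ℝ)/((Nf k:ℝ)+1) ≤ 1 := by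
          rw [div_le_one hden]
          linarith
        nlinarith
      have h3 : 2 * (1/2:ℝ)^(k+4) = (1/2:ℝ)^(k+3) := by ring
      linarith
    have hfin : (1/2:ℝ)^(k+2) + (1/2:ℝ)^(k+3) ≤ (1/2:ℝ)^k := by
      have : (1/2:ℝ)^(k+2) = (1/4:ℝ) * (1/2:ℝ)^k := by ring
      have h2 : (1/2:ℝ)^(k+3) = (1/8:ℝ) * (1/2:ℝ)^k := by ring
      have hpow : (0:ℝ) ≤ (1/2:ℝ)^k := by positivity
      nlinarith
    have := EKM.nintDist_le_half ((Nf k:ℝ) * (Z k (z k)) - (Nf k:ℝ) * y)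
    linarith
  exact Set.mem_add.mpr ⟨p, hpP, y - p, hdmem, by ring⟩
end

section
/- For every nonempty perfect set P ⊆ ℝ there exists a strictly increasing sequence of natural numbers (n_k) such that, setting D = {x ∈ ℝ : ‖n_k·x‖ ≤ 2^{-k} for all but finitely many k}, the set P ∩ (y − D) is dense in P for every y ∈ ℝ. -/
open MeasureTheory Filter Set

lemma nintDist_nonneg (x : ℝ) : 0 ≤ nintDist x := abs_nonneg _

lemma nintDist_le_half (x : ℝ) : nintDist x ≤ 1/2 := abs_sub_round x

lemma nintDist_le_abs_sub_int (x : ℝ) (m : ℤ) : nintDist x ≤ |x - m| := by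
  rcases eq_or_ne m (round x) with h | h
  · simp [nintDist, h]
  · have h1 : (1 : ℝ) ≤ |(m : ℝ) - round x| := by
      have : (m : ℝ) - round x = ((m - round x : ℤ) : ℝ) := by push_cast; ring
      rw [this, ← Int.cast_abs]
      exact_mod_cast Int.one_le_abs (sub_ne_zero.mpr h)
    have h2 := abs_sub_round x
    have h3 : |(m:ℝ) - round x| - |x - round x| ≤ |x - m| := by
      have := abs_sub_abs_le_abs_sub ((m:ℝ) - round x) (x - round x)
      have e : (m:ℝ) - round x - (x - round x) = -(x - m) := by ring
      rw [e, abs_neg] at this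
      linarith
    have : (1:ℝ)/2 ≤ |x - m| := by linarith
    calc nintDist x ≤ 1/2 := nintDist_le_half x
    _ ≤ |x - m| := this

lemma nintDist_le_abs (x : ℝ) : nintDist x ≤ |x| := by
  simpa using nintDist_le_abs_sub_int x 0

lemma nintDist_add_le (x y : ℝ) : nintDist (x + y) ≤ nintDist x + nintDist y := by
  calc nintDist (x + y) ≤ |x + y - ((round x + round y : ℤ) : ℝ)| :=
        nintDist_le_abs_sub_int _ _
  _ ≤ |x - round x| + |y - round y| := by
        push_cast
        have : x + y - ((round x : ℝ) + round y) = (x - round x) + (y - round y) := by ring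
        rw [this]; exact abs_add_le _ _
  _ = nintDist x + nintDist y := rfl

lemma nintDist_neg (x : ℝ) : nintDist (-x) = nintDist x := by
  have h : ∀ z : ℝ, nintDist (-z) ≤ nintDist z := by
    intro z
    calc nintDist (-z) ≤ |(-z) - ((-round z : ℤ) : ℝ)| := nintDist_le_abs_sub_int _ _
    _ = |z - round z| := by push_cast; rw [← abs_neg]; ring_nf
    _ = nintDist z := rfl
  refine le_antisymm (h x) ?_
  simpa using h (-x)

lemma nintDist_sub_comm (x y : ℝ) : nintDist (x - y) = nintDist (y - x) := by
  rw [← nintDist_neg (x - y)]; ring_nf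

-- cos relation
lemma cos_two_pi_nintDist (x : ℝ) :
    Real.cos (2 * Real.pi * x) = Real.cos (2 * Real.pi * nintDist x) := by
  have h1 : 2 * Real.pi * x = 2 * Real.pi * (x - round x) + (round x : ℤ) * (2 * Real.pi) := by
    push_cast; ring
  rw [h1, Real.cos_add_int_mul_two_pi, nintDist]
  rcases abs_cases (x - round x) with ⟨h, _⟩ | ⟨h, _⟩
  · rw [h]
  · rw [h, mul_neg, Real.cos_neg]

-- net lemma
lemma net_lemma (M : ℕ) (hM : 0 < M) (β : ℝ) :
    ∃ i : Fin M, nintDist (β - (i : ℝ) / M) ≤ 1 / (2 * M) := by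
  set j : ℤ := round (β * M) with hj
  have hMR : (0:ℝ) < M := by exact_mod_cast hM
  have hmod : 0 ≤ j % M ∧ j % M < M := by
    constructor
    · exact Int.emod_nonneg j (by exact_mod_cast hM.ne')
    · exact_mod_cast Int.emod_lt_of_pos j (by exact_mod_cast hM)
  refine ⟨⟨(j % M).toNat, by omega⟩, ?_⟩
  have hcast : (((j % (M:ℤ)).toNat : ℕ) : ℝ) = ((j % M : ℤ) : ℝ) := by
    exact_mod_cast congrArg Int.cast (Int.toNat_of_nonneg hmod.1)
  calc nintDist (β - ((j % M).toNat : ℝ) / M) ≤ |β - ((j % M).toNat : ℝ) / M - ((j / M : ℤ) : ℝ)| :=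
        nintDist_le_abs_sub_int _ _
  _ = |β * M - j| / M := by
        rw [← abs_of_pos hMR, ← abs_div]
        congr 1
        have hdm : (M:ℝ) * ((j / M : ℤ) : ℝ) + ((j % M : ℤ) : ℝ) = (j : ℝ) := by
          exact_mod_cast congrArg Int.cast (Int.mul_ediv_add_emod j M)
        rw [hcast, abs_of_pos hMR, eq_div_iff hMR.ne', sub_mul, sub_mul, div_mul_cancel₀ _ hMR.ne']
        linear_combination -hdm
  _ ≤ (1/2) / M := by
        gcongr
        exact abs_sub_round _
  _ = 1 / (2 * M) := by ring


noncomputable def expc (θ : ℝ) : ℂ := Complex.exp (2 * Real.pi * Complex.I * θ)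

lemma expc_add (a b : ℝ) : expc (a + b) = expc a * expc b := by
  rw [expc, expc, expc, ← Complex.exp_add]; congr 1; push_cast; ring

lemma expc_zero : expc 0 = 1 := by simp [expc]

lemma expc_norm (θ : ℝ) : ‖expc θ‖ = 1 := by
  have h : (2 * Real.pi * Complex.I * θ) = ((2*Real.pi*θ : ℝ) : ℂ) * Complex.I := by
    push_cast; ring
  rw [expc, h, Complex.norm_exp_ofReal_mul_I]

lemma expc_nat_mul (n : ℕ) (θ : ℝ) : expc (n * θ) = expc θ ^ n := by
  rw [expc, expc, ← Complex.exp_nat_mul]; congr 1; push_cast; ring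

lemma expc_sum {ι : Type*} (s : Finset ι) (f : ι → ℝ) :
    expc (∑ i ∈ s, f i) = ∏ i ∈ s, expc (f i) := by
  rw [expc, Complex.ofReal_sum, Finset.mul_sum, Complex.exp_sum]
  rfl

lemma expc_eq_one_iff {θ : ℝ} : expc θ = 1 ↔ ∃ m : ℤ, θ = m := by
  rw [expc, Complex.exp_eq_one_iff]
  constructor
  · rintro ⟨m, hm⟩
    refine ⟨m, ?_⟩
    have h2 : (2 * (Real.pi:ℂ) * Complex.I) ≠ 0 := by
      simp [Real.pi_ne_zero, Complex.I_ne_zero]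
    have : (2 * (Real.pi:ℂ) * Complex.I) * θ = (2 * (Real.pi:ℂ) * Complex.I) * m := by
      rw [show (2 * (Real.pi:ℂ) * Complex.I) * (θ:ℂ) = 2 * ↑Real.pi * Complex.I * ↑θ from by ring,
        hm]; ring
    have := mul_left_cancel₀ h2 this
    exact_mod_cast this
  · rintro ⟨m, rfl⟩
    exact ⟨m, by push_cast; ring⟩

lemma Irrational.expc_ne_one {θ : ℝ} (h : Irrational θ) : expc θ ≠ 1 := by
  intro hc
  obtain ⟨m, rfl⟩ := expc_eq_one_iff.mp hc
  exact Int.not_irrational m h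

lemma expc_conj_pair (θ : ℝ) : expc θ + expc (-θ) = 2 * (Real.cos (2 * Real.pi * θ) : ℂ) := by
  have h1 : expc θ = Complex.exp (((2 * Real.pi * θ : ℝ) : ℂ) * Complex.I) := by
    rw [expc]; congr 1; push_cast; ring
  have h2 : expc (-θ) = Complex.exp ((-(2 * Real.pi * θ : ℝ) : ℂ) * Complex.I) := by
    rw [expc]; congr 1; push_cast; ring
  rw [h1, h2, Complex.exp_mul_I, Complex.exp_mul_I, Complex.cos_neg, Complex.sin_neg,
    Complex.ofReal_cos]
  ring

def BddSums (h : ℕ → ℂ) : Prop := ∃ C : ℝ, ∀ N : ℕ, ‖∑ n ∈ Finset.range N, h n‖ ≤ C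

lemma norm_geom_sum_le {z : ℂ} (hnorm : ‖z‖ = 1) (hne : z ≠ 1) (N : ℕ) :
    ‖∑ n ∈ Finset.range N, z ^ n‖ ≤ 2 / ‖z - 1‖ := by
  rw [geom_sum_eq hne]
  rw [norm_div]
  have h1 : ‖z ^ N - 1‖ ≤ 2 := by
    calc ‖z ^ N - 1‖ ≤ ‖z ^ N‖ + ‖(1:ℂ)‖ := norm_sub_le _ _
    _ = 2 := by rw [norm_pow, hnorm]; simp; norm_num
  have h2 : 0 < ‖z - 1‖ := norm_pos_iff.mpr (sub_ne_zero.mpr hne)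
  gcongr

-- binomial expansion of the Fejér-type kernel
set_option maxHeartbeats 1000000 in
lemma kernel_expand (K : ℕ) (θ : ℝ) :
    ((((1 + Real.cos (2*Real.pi*θ))/2)^K : ℝ) : ℂ) =
      ∑ q ∈ Finset.range (K+1) ×ˢ Finset.range (K+1),
        ((K.choose q.1 : ℂ) * (K.choose q.2) / 4^K) * expc ((((q.1:ℤ) - q.2 : ℤ) : ℝ) * θ) := by
  have h1 : (1 + expc θ)^K = ∑ j ∈ Finset.range (K+1), (K.choose j : ℂ) * expc θ ^ j := by
    rw [add_comm, add_pow]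
    refine Finset.sum_congr rfl fun j hj => ?_
    rw [one_pow, mul_one]; ring
  have h2 : (1 + expc (-θ))^K = ∑ j ∈ Finset.range (K+1), (K.choose j : ℂ) * expc (-θ) ^ j := by
    rw [add_comm, add_pow]
    refine Finset.sum_congr rfl fun j hj => ?_
    rw [one_pow, mul_one]; ring
  have key : (1 + expc θ) * (1 + expc (-θ)) = 4 * (((1 + Real.cos (2*Real.pi*θ))/2 : ℝ) : ℂ) := by
    have hmul : expc θ * expc (-θ) = 1 := by
      rw [← expc_add]; simp [expc_zero]
    have hsum := expc_conj_pair θ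
    push_cast at hsum ⊢
    linear_combination hsum + hmul
  calc ((((1 + Real.cos (2*Real.pi*θ))/2)^K : ℝ) : ℂ)
      = ((1 + expc θ) * (1 + expc (-θ)))^K / 4^K := by
        rw [key]; push_cast
        rw [mul_pow]
        field_simp
    _ = (∑ j ∈ Finset.range (K+1), (K.choose j : ℂ) * expc θ ^ j) *
        (∑ j ∈ Finset.range (K+1), (K.choose j : ℂ) * expc (-θ) ^ j) / 4^K := by
        rw [mul_pow, h1, h2]
    _ = ∑ q ∈ Finset.range (K+1) ×ˢ Finset.range (K+1),
        ((K.choose q.1 : ℂ) * (K.choose q.2) / 4^K) * expc ((((q.1:ℤ) - q.2 : ℤ) : ℝ) * θ) := by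
        rw [Finset.sum_mul_sum]
        rw [Finset.sum_product]
        rw [Finset.sum_div]
        refine Finset.sum_congr rfl fun j hj => ?_
        rw [Finset.sum_div]
        refine Finset.sum_congr rfl fun j' hj' => ?_
        have he : expc ((((j:ℤ) - j' : ℤ) : ℝ) * θ) = expc θ ^ j * expc (-θ) ^ j' := by
          rw [← expc_nat_mul, ← expc_nat_mul, ← expc_add]
          congr 1
          push_cast; ring
        rw [he]; ring

set_option maxHeartbeats 2000000 in
theorem kronecker {ι : Type} [Fintype ι] [DecidableEq ι] (x t : ι → ℝ)
    (hind : ∀ c : ι → ℤ, (∃ i, c i ≠ 0) → Irrational (∑ i, (c i : ℝ) * x i))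
    {ε : ℝ} (hε : 0 < ε) (hε4 : ε ≤ 1/4) (N0 : ℕ) :
    ∃ n : ℕ, N0 < n ∧ ∀ i, nintDist (n * x i - t i) < ε := by
  classical
  by_contra hcon
  push_neg at hcon
  -- hcon : ∀ n, N0 < n → ∃ i, ε ≤ nintDist (n * x i - t i)
  set m := Fintype.card ι with hm
  set ρ : ℝ := (1 + Real.cos (2 * Real.pi * ε)) / 2 with hρ
  have hπ := Real.pi_pos
  have hρ0 : (0:ℝ) < ρ := by
    have : 0 ≤ Real.cos (2 * Real.pi * ε) := by
      apply Real.cos_nonneg_of_mem_Icc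
      constructor <;> nlinarith
    rw [hρ]; linarith
  have hρ1 : ρ < 1 := by
    have h1 : Real.cos (2 * Real.pi * ε) < Real.cos 0 :=
      Real.cos_lt_cos_of_nonneg_of_le_pi (le_refl 0)
        (by nlinarith : 2 * Real.pi * ε ≤ Real.pi) (by positivity)
    rw [Real.cos_zero] at h1
    rw [hρ]; linarith
  -- choose K
  obtain ⟨K1, hK11, hK1⟩ : ∃ k : ℕ, 1 ≤ k ∧ (k:ℝ)^(2*m) * ρ^k < ρ/2 := by
    have hsum := summable_pow_mul_geometric_of_norm_lt_one (R := ℝ) (2*m)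
      (r := ρ) (by rw [Real.norm_eq_abs, abs_of_pos hρ0]; exact hρ1)
    have h0 := hsum.tendsto_atTop_zero
    have hev := (h0.eventually_lt_const (by positivity : (0:ℝ) < ρ/2)).and
      (eventually_ge_atTop 1)
    obtain ⟨k, hk1, hk2⟩ := hev.exists
    exact ⟨k, hk2, hk1⟩
  obtain ⟨K, rfl⟩ : ∃ K, K1 = K + 1 := ⟨K1 - 1, by omega⟩
  set cstar : ℝ := (1/((K:ℝ)+1)^2)^m with hcstar
  have hcstar0 : 0 < cstar := by positivity
  have hKbound : ((K:ℝ)+1)^(2*m) * ρ^K < 1/2 := by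
    have h2 : ((K+1:ℕ):ℝ)^(2*m) * ρ^(K+1) = (((K:ℝ)+1)^(2*m) * ρ^K) * ρ := by
      push_cast; ring
    rw [h2] at hK1
    have := lt_of_mul_lt_mul_right (by linarith : (((K:ℝ)+1)^(2*m) * ρ^K) * ρ < (1/2) * ρ) hρ0.le
    exact this
  have hcρ : ρ^K < cstar := by
    have hpow : cstar * (((K:ℝ)+1)^(2*m)) = 1 := by
      rw [hcstar, pow_mul]
      rw [← mul_pow]
      rw [div_mul_cancel₀]
      · exact one_pow m
      · positivity
    have hK1pos : (0:ℝ) < ((K:ℝ)+1)^(2*m) := by positivity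
    nlinarith
  set f : ℝ → ℝ := fun θ => ((1 + Real.cos (2*Real.pi*θ))/2)^K with hf
  have hf0 : ∀ θ, 0 ≤ f θ := by
    intro θ
    have := Real.neg_one_le_cos (2*Real.pi*θ)
    apply pow_nonneg; linarith
  have hf1 : ∀ θ, f θ ≤ 1 := by
    intro θ
    have := Real.cos_le_one (2*Real.pi*θ)
    apply pow_le_one₀ ?_ ?_
    · have := Real.neg_one_le_cos (2*Real.pi*θ); linarith
    · linarith
  have hffail : ∀ θ, ε ≤ nintDist θ → f θ ≤ ρ^K := by
    intro θ hθ
    have hnd := nintDist_le_half θ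
    have hndnn : ε ≤ nintDist θ := hθ
    have hcc : Real.cos (2*Real.pi*θ) ≤ Real.cos (2*Real.pi*ε) := by
      rw [cos_two_pi_nintDist θ]
      apply Real.cos_le_cos_of_nonneg_of_le_pi
      · positivity
      · nlinarith
      · nlinarith
    apply pow_le_pow_left₀ ?_ ?_ K
    · have := Real.neg_one_le_cos (2*Real.pi*θ); linarith
    · rw [hρ]; linarith
  -- expansion set-up
  set A : Finset (ℕ × ℕ) := Finset.range (K+1) ×ˢ Finset.range (K+1) with hA
  set d : ℕ × ℕ → ℤ := fun q => (q.1 : ℤ) - q.2 with hd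
  set coef : ι → ℕ × ℕ → ℂ :=
    fun i q => ((K.choose q.1 : ℂ) * (K.choose q.2) / 4^K) * expc (-(d q : ℝ) * t i) with hcoef
  have hexp : ∀ (i : ι) (n : ℕ),
      ((f (n * x i - t i) : ℝ) : ℂ) = ∑ q ∈ A, coef i q * expc ((n:ℝ) * ((d q : ℝ) * x i)) := by
    intro i n
    rw [hf]
    rw [kernel_expand K (n * x i - t i)]
    refine Finset.sum_congr rfl fun q hq => ?_
    rw [hcoef]
    have harg : ((d q : ℝ)) * (n * x i - t i) = (n:ℝ) * ((d q : ℝ) * x i) + (-(d q : ℝ) * t i) := by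
      ring
    rw [hd] at harg ⊢
    push_cast at harg ⊢
    rw [harg, expc_add]
    ring
  set Φ : Finset (ι → ℕ × ℕ) := Fintype.piFinset (fun _ : ι => A) with hΦ
  set freq : (ι → ℕ × ℕ) → ℝ := fun p => ∑ i, (d (p i) : ℝ) * x i with hfreq
  set Cp : (ι → ℕ × ℕ) → ℂ := fun p => ∏ i, coef i (p i) with hCp
  set F : ℕ → ℂ := fun n => ∏ i, ((f (n * x i - t i) : ℝ) : ℂ) with hF
  have hFsum : ∀ n, F n = ∑ p ∈ Φ, Cp p * expc (n * freq p) := by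
    intro n
    rw [hF]
    simp only [hexp]
    rw [Finset.prod_univ_sum]
    refine Finset.sum_congr rfl fun p hp => ?_
    rw [Finset.prod_mul_distrib, hCp, hfreq]
    congr 1
    rw [Finset.mul_sum, expc_sum]
  -- diagonal part
  set Diag : Finset (ι → ℕ × ℕ) := Φ.filter (fun p => ∀ i, (p i).1 = (p i).2) with hDiag
  have hDiagΦ : Diag ⊆ Φ := Finset.filter_subset _ _
  set w : (ι → ℕ × ℕ) → ℝ := fun p => ∏ i, (K.choose (p i).1 : ℝ)^2/4^K with hw
  have hw0 : ∀ p, 0 ≤ w p := by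
    intro p; rw [hw]; apply Finset.prod_nonneg; intro i _; positivity
  have hdiag_freq : ∀ p ∈ Diag, freq p = 0 := by
    intro p hp
    rw [hDiag, Finset.mem_filter] at hp
    rw [hfreq]
    apply Finset.sum_eq_zero
    intro i _
    have h2 : d (p i) = 0 := by simp only [hd]; rw [hp.2 i, sub_self]
    rw [h2]
    simp
  have hdiag_Cp : ∀ p ∈ Diag, Cp p = ((w p : ℝ) : ℂ) := by
    intro p hp
    rw [hDiag, Finset.mem_filter] at hp
    rw [hCp, hw, Complex.ofReal_prod]
    refine Finset.prod_congr rfl fun i _ => ?_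
    have h2 : d (p i) = 0 := by simp only [hd]; rw [hp.2 i, sub_self]
    rw [hcoef]
    simp only [h2]
    rw [hp.2 i]
    push_cast
    simp [expc_zero]
    ring
  set v : ℝ := ∑ p ∈ Diag, w p with hv
  -- lower bound on v
  have hvlow : cstar ≤ v := by
    set p0 : ι → ℕ × ℕ := fun _ => (K/2, K/2) with hp0
    have hp0mem : p0 ∈ Diag := by
      rw [hDiag, Finset.mem_filter]
      constructor
      · rw [hΦ, Fintype.mem_piFinset]
        intro i
        simp only [hp0, hA, Finset.mem_product, Finset.mem_range]
        omega
      · intro i; rfl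
    have hchoose : (2:ℝ)^K ≤ ((K:ℝ)+1) * (K.choose (K/2) : ℝ) := by
      have h1 : (2:ℕ)^K = ∑ j ∈ Finset.range (K+1), K.choose j := (Nat.sum_range_choose K).symm
      have h2 : ∑ j ∈ Finset.range (K+1), K.choose j ≤ (K+1) * K.choose (K/2) := by
        calc ∑ j ∈ Finset.range (K+1), K.choose j
            ≤ ∑ _j ∈ Finset.range (K+1), K.choose (K/2) :=
              Finset.sum_le_sum fun j _ => Nat.choose_le_middle j K
        _ = (K+1) * K.choose (K/2) := by rw [Finset.sum_const, Finset.card_range]; ring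
      have := h1 ▸ h2
      exact_mod_cast this
    have hwp0 : cstar ≤ w p0 := by
      have hw0eq : w p0 = ((K.choose (K/2) : ℝ)^2 / 4^K)^m := by
        rw [hw]
        simp only [hp0]
        rw [Finset.prod_const, Finset.card_univ, hm]
      rw [hw0eq, hcstar]
      apply pow_le_pow_left₀ (by positivity)
      have hK1pos : (0:ℝ) < (K:ℝ)+1 := by positivity
      have h2K : (0:ℝ) < (2:ℝ)^K := by positivity
      have h4 : (4:ℝ)^K = 2^K * 2^K := by
        rw [show (4:ℝ) = 2*2 by norm_num, mul_pow]
      have hmul := mul_le_mul hchoose hchoose h2K.le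
        (by positivity : (0:ℝ) ≤ ((K:ℝ)+1) * (K.choose (K/2) : ℝ))
      rw [div_le_div_iff₀ (by positivity) (by positivity)]
      nlinarith [hmul, h4]
    calc cstar ≤ w p0 := hwp0
    _ ≤ v := Finset.single_le_sum (fun p _ => hw0 p) hp0mem
  have hDiagsum : ∑ p ∈ Diag, Cp p = ((v:ℝ):ℂ) := by
    rw [hv]
    push_cast
    exact Finset.sum_congr rfl hdiag_Cp
  -- off-diagonal
  have hoff_irr : ∀ p ∈ Φ \ Diag, Irrational (freq p) := by
    intro p hp
    rw [Finset.mem_sdiff] at hp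
    have : ∃ i, (p i).1 ≠ (p i).2 := by
      by_contra hno
      push_neg at hno
      exact hp.2 (by rw [hDiag, Finset.mem_filter]; exact ⟨hp.1, hno⟩)
    obtain ⟨i0, hi0⟩ := this
    have hd0 : d (p i0) ≠ 0 := by
      simp only [hd]
      intro hc
      exact hi0 (by exact_mod_cast sub_eq_zero.mp hc)
    have := hind (fun i => d (p i)) ⟨i0, hd0⟩
    rw [hfreq]
    exact this
  set C0 : ℝ := ∑ p ∈ Φ \ Diag, ‖Cp p‖ * (2 / ‖expc (freq p) - 1‖) with hC0
  have hGN : ∀ N : ℕ, ∑ n ∈ Finset.range N, F n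
      = (N:ℂ) * ((v:ℝ):ℂ) + ∑ p ∈ Φ \ Diag, Cp p * (∑ n ∈ Finset.range N, expc (freq p)^n) := by
    intro N
    have h1 : ∑ n ∈ Finset.range N, F n = ∑ p ∈ Φ, Cp p * (∑ n ∈ Finset.range N, expc (n * freq p)) := by
      simp only [hFsum]
      rw [Finset.sum_comm]
      exact Finset.sum_congr rfl fun p _ => by rw [Finset.mul_sum]
    rw [h1]
    rw [← Finset.sum_sdiff hDiagΦ]
    have h2 : ∑ p ∈ Diag, Cp p * (∑ n ∈ Finset.range N, expc (n * freq p)) = (N:ℂ) * ((v:ℝ):ℂ) := by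
      have : ∀ p ∈ Diag, Cp p * (∑ n ∈ Finset.range N, expc (n * freq p)) = (N:ℂ) * Cp p := by
        intro p hp
        rw [hdiag_freq p hp]
        simp [expc_zero]
        ring
      rw [Finset.sum_congr rfl this, ← Finset.mul_sum, hDiagsum]
    have h3 : ∀ p ∈ Φ \ Diag, Cp p * (∑ n ∈ Finset.range N, expc (n * freq p))
        = Cp p * (∑ n ∈ Finset.range N, expc (freq p)^n) := by
      intro p _
      congr 1
      exact Finset.sum_congr rfl fun n _ => expc_nat_mul n (freq p)
    rw [Finset.sum_congr rfl h3, h2]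
    ring
  have hEb : ∀ N : ℕ, ‖∑ p ∈ Φ \ Diag, Cp p * (∑ n ∈ Finset.range N, expc (freq p)^n)‖ ≤ C0 := by
    intro N
    calc ‖∑ p ∈ Φ \ Diag, Cp p * (∑ n ∈ Finset.range N, expc (freq p)^n)‖
        ≤ ∑ p ∈ Φ \ Diag, ‖Cp p * (∑ n ∈ Finset.range N, expc (freq p)^n)‖ :=
          norm_sum_le _ _
    _ ≤ C0 := by
        rw [hC0]
        apply Finset.sum_le_sum
        intro p hp
        rw [norm_mul]
        apply mul_le_mul_of_nonneg_left ?_ (norm_nonneg _)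
        exact norm_geom_sum_le (expc_norm _) ((hoff_irr p hp).expc_ne_one) N
  -- real sums
  set S : ℕ → ℝ := fun N => ∑ n ∈ Finset.range N, ∏ i, f (n * x i - t i) with hS
  have hSF : ∀ N, ((S N : ℝ) : ℂ) = ∑ n ∈ Finset.range N, F n := by
    intro N
    rw [hS, hF]
    push_cast
    rfl
  have hlow : ∀ N : ℕ, (N:ℝ) * cstar - C0 ≤ S N := by
    intro N
    have h1 := hGN N
    rw [← hSF N] at h1
    have h2 : S N = (N:ℝ) * v + (∑ p ∈ Φ \ Diag, Cp p * (∑ n ∈ Finset.range N, expc (freq p)^n)).re := by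
      have := congrArg Complex.re h1
      simpa using this
    have h3 : -C0 ≤ (∑ p ∈ Φ \ Diag, Cp p * (∑ n ∈ Finset.range N, expc (freq p)^n)).re := by
      have habs := Complex.abs_re_le_norm (∑ p ∈ Φ \ Diag, Cp p * (∑ n ∈ Finset.range N, expc (freq p)^n))
      have hnorm := hEb N
      have := abs_le.mp (le_trans habs hnorm)
      exact this.1
    have h4 : (N:ℝ) * cstar ≤ (N:ℝ) * v := by
      apply mul_le_mul_of_nonneg_left hvlow (Nat.cast_nonneg N)
    linarith
  have hhigh : ∀ N : ℕ, S N ≤ ((N0:ℝ) + 1) + (N:ℝ) * ρ^K := by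
    intro N
    have hterm : ∀ n : ℕ, ∏ i, f ((n:ℝ) * x i - t i) ≤ ρ^K + (if n ≤ N0 then 1 else 0) := by
      intro n
      by_cases hn : n ≤ N0
      · rw [if_pos hn]
        have h1 : ∏ i, f ((n:ℝ) * x i - t i) ≤ 1 :=
          Finset.prod_le_one (fun i _ => hf0 _) (fun i _ => hf1 _)
        have : (0:ℝ) ≤ ρ^K := by positivity
        linarith
      · rw [if_neg hn, add_zero]
        obtain ⟨i0, hi0⟩ := hcon n (by omega)
        calc ∏ i, f ((n:ℝ) * x i - t i)
            = f ((n:ℝ) * x i0 - t i0) * ∏ i ∈ Finset.univ.erase i0, f ((n:ℝ) * x i - t i) :=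
              (Finset.mul_prod_erase Finset.univ _ (Finset.mem_univ i0)).symm
        _ ≤ ρ^K * 1 := by
              apply mul_le_mul (hffail _ hi0)
                (Finset.prod_le_one (fun i _ => hf0 _) (fun i _ => hf1 _))
                (Finset.prod_nonneg (fun i _ => hf0 _)) (by positivity)
        _ = ρ^K := mul_one _
    calc S N ≤ ∑ n ∈ Finset.range N, (ρ^K + (if n ≤ N0 then (1:ℝ) else 0)) :=
          Finset.sum_le_sum (fun n _ => hterm n)
    _ = (N:ℝ) * ρ^K + ∑ n ∈ Finset.range N, (if n ≤ N0 then (1:ℝ) else 0) := by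
          rw [Finset.sum_add_distrib, Finset.sum_const, Finset.card_range, nsmul_eq_mul]
    _ ≤ (N:ℝ) * ρ^K + ((N0:ℝ) + 1) := by
          have h1 : ∑ n ∈ Finset.range N, (if n ≤ N0 then (1:ℝ) else 0)
              ≤ ((N0:ℝ) + 1) := by
            rw [← Finset.sum_filter, Finset.sum_const, nsmul_eq_mul, mul_one]
            have hsub : (Finset.range N).filter (fun n => n ≤ N0) ⊆ Finset.range (N0+1) := by
              intro n hn
              rw [Finset.mem_filter] at hn
              rw [Finset.mem_range]
              omega
            have := Finset.card_le_card hsub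
            rw [Finset.card_range] at this
            exact_mod_cast this
          linarith
    _ = ((N0:ℝ) + 1) + (N:ℝ) * ρ^K := by ring
  -- final contradiction
  obtain ⟨N, hN⟩ := exists_nat_gt (((N0:ℝ) + 1 + C0) / (cstar - ρ^K))
  have hpos : 0 < cstar - ρ^K := by linarith
  have h1 := hlow N
  have h2 := hhigh N
  rw [div_lt_iff₀ hpos] at hN
  nlinarith


lemma not_countable_cantor : ¬ Countable (ℕ → Bool) := by
  intro h
  have h2 : Countable (Set ℕ) := by
    have e : (ℕ → Bool) ≃ Set ℕ :=
      (Equiv.piCongrRight fun _ => Equiv.propEquivBool.symm)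
    exact Countable.of_equiv _ e
  obtain ⟨g, hg⟩ := exists_injective_nat (Set ℕ)
  exact Function.cantor_injective g hg

lemma perfect_pick {P : Set ℝ} (hP : Perfect P) {a b : ℝ}
    (hne : (P ∩ Ioo a b).Nonempty) (S : Set ℝ) (hS : S.Countable) :
    ∃ z, z ∈ P ∩ Ioo a b ∧ z ∉ S := by
  by_contra hcon
  push_neg at hcon
  obtain ⟨w, hwP, hwI⟩ := hne
  have hab : a < b := lt_trans hwI.1 hwI.2
  obtain ⟨hC', hne'⟩ := hP.closure_nhds_inter w hwP hwI isOpen_Ioo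
  obtain ⟨f, hfr, _, hfi⟩ := hC'.exists_nat_bool_injection hne'
  have hsub : closure (Ioo a b ∩ P) ⊆ S ∪ {a, b} := by
    have h1 : closure (Ioo a b ∩ P) ⊆ Icc a b ∩ P := by
      apply subset_inter
      · refine (closure_mono inter_subset_left).trans ?_
        rw [closure_Ioo hab.ne]
      · refine (closure_mono inter_subset_right).trans ?_
        rw [hP.closed.closure_eq]
    intro z hz
    obtain ⟨hzI, hzP⟩ := h1 hz
    by_cases hza : z = a
    · exact Or.inr (Or.inl hza)
    by_cases hzb : z = b
    · exact Or.inr (Or.inr hzb)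
    exact Or.inl (hcon z ⟨hzP, lt_of_le_of_ne hzI.1 (Ne.symm hza), lt_of_le_of_ne hzI.2 hzb⟩)
  have hScount : (S ∪ {a, b} : Set ℝ).Countable := by
    apply hS.union
    exact (Set.countable_singleton b).insert a
  have hrange : (range f).Countable := hScount.mono (hfr.trans hsub)
  have hcr : Countable (range f) := Set.countable_coe_iff.mpr hrange
  have : Countable (ℕ → Bool) := Countable.of_equiv _ (Equiv.ofInjective f hfi).symm
  exact not_countable_cantor this

lemma ind_points_fin {P : Set ℝ} (hP : Perfect P) :
    ∀ (m : ℕ) (I : Fin m → ℝ × ℝ), (∀ j, (P ∩ Ioo (I j).1 (I j).2).Nonempty) →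
    ∃ x : Fin m → ℝ, (∀ j, x j ∈ P ∩ Ioo (I j).1 (I j).2) ∧
      ∀ c : Fin m → ℤ, (∃ j, c j ≠ 0) → Irrational (∑ j, (c j : ℝ) * x j) := by
  intro m
  induction m with
  | zero =>
    intro I h
    exact ⟨fun j => j.elim0, fun j => j.elim0, fun c hc => absurd hc (by simp [Fin.elim0])⟩
  | succ m ih =>
    intro I hI
    obtain ⟨x, hx1, hx2⟩ := ih (fun j => I j.castSucc) (fun j => hI j.castSucc)
    set S : Set ℝ :=
      range (fun p : (Fin m → ℚ) × ℚ => (p.2 : ℝ) + ∑ j, (p.1 j : ℝ) * x j) with hs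
    obtain ⟨z, hz1, hz2⟩ := perfect_pick hP (hI (Fin.last m)) S (countable_range _)
    refine ⟨Fin.snoc x z, ?_, ?_⟩
    · intro j
      refine Fin.lastCases ?_ ?_ j
      · simpa [Fin.snoc_last] using hz1
      · intro j'
        simpa [Fin.snoc_castSucc] using hx1 j'
    · intro c hc
      rw [Fin.sum_univ_castSucc]
      simp only [Fin.snoc_castSucc, Fin.snoc_last]
      by_cases hlast : c (Fin.last m) = 0
      · rw [hlast]
        push_cast
        rw [zero_mul, add_zero]
        apply hx2 (fun j => c j.castSucc)
        obtain ⟨j, hj⟩ := hc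
        rcases Fin.eq_castSucc_or_eq_last j with ⟨j', rfl⟩ | rfl
        · exact ⟨j', hj⟩
        · exact absurd hlast hj
      · rintro ⟨q, hq⟩
        apply hz2
        rw [hs]
        refine ⟨⟨fun j => -(c j.castSucc : ℚ) / (c (Fin.last m) : ℚ),
          q / (c (Fin.last m) : ℚ)⟩, ?_⟩
        have hcl : ((c (Fin.last m) : ℚ) : ℝ) ≠ 0 := by exact_mod_cast hlast
        have hclQ : (c (Fin.last m) : ℚ) ≠ 0 := by exact_mod_cast hlast
        push_cast
        field_simp
        have hcl' : ((c (Fin.last m) : ℤ) : ℝ) ≠ 0 := by exact_mod_cast hlast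
        have hdiv : (∑ j : Fin m, -((c j.castSucc : ℝ) * x j) / ((c (Fin.last m) : ℤ) : ℝ))
            = -(∑ j : Fin m, ((c j.castSucc : ℝ) * x j)) / ((c (Fin.last m) : ℤ) : ℝ) := by
          rw [← Finset.sum_div, ← Finset.sum_neg_distrib]
        have hsum2 : ∀ j : Fin m, ((c (Fin.last m) : ℤ) : ℝ) * -((c j.castSucc : ℝ) * x j / ((c (Fin.last m) : ℤ) : ℝ)) = -((c j.castSucc : ℝ) * x j) := fun j => by field_simp
        rw [Finset.mul_sum, Finset.sum_congr rfl (fun j _ => hsum2 j), Finset.sum_neg_distrib]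
        linear_combination hq

lemma ind_points {P : Set ℝ} (hP : Perfect P) {ι : Type} [Fintype ι]
    (I : ι → ℝ × ℝ) (hI : ∀ j, (P ∩ Ioo (I j).1 (I j).2).Nonempty) :
    ∃ x : ι → ℝ, (∀ j, x j ∈ P ∩ Ioo (I j).1 (I j).2) ∧
      ∀ c : ι → ℤ, (∃ j, c j ≠ 0) → Irrational (∑ j, (c j : ℝ) * x j) := by
  classical
  set e := Fintype.equivFin ι with he
  obtain ⟨x, hx1, hx2⟩ := ind_points_fin hP (Fintype.card ι) (I ∘ e.symm)
    (fun j => hI (e.symm j))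
  refine ⟨x ∘ e, ?_, ?_⟩
  · intro j
    have := hx1 (e j)
    simpa using this
  · intro c hc
    have hsum : (∑ j, (c j : ℝ) * (x ∘ e) j)
        = ∑ k, ((c (e.symm k) : ℝ)) * x k := by
      apply Fintype.sum_equiv e
      intro j
      simp
    rw [hsum]
    apply hx2
    obtain ⟨j, hj⟩ := hc
    exact ⟨e j, by simpa using hj⟩

lemma step_lemma {P : Set ℝ} (hP : Perfect P) (k N0 : ℕ) (L : Finset (ℝ × ℝ))
    (hL : ∀ I ∈ L, (P ∩ Ioo I.1 I.2).Nonempty) (z : ℝ) (hz : z ∈ P) {δ : ℝ} (hδ : 0 < δ) :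
    ∃ (n : ℕ) (L' : Finset (ℝ × ℝ)), N0 < n ∧ (∀ I ∈ L', (P ∩ Ioo I.1 I.2).Nonempty) ∧
      (∃ I' ∈ L', Icc I'.1 I'.2 ⊆ Metric.ball z δ) ∧
      (∀ I ∈ L, ∀ β : ℝ, ∃ I' ∈ L', Icc I'.1 I'.2 ⊆ Ioo I.1 I.2 ∧
        ∀ q ∈ Icc I'.1 I'.2, nintDist (β - n * q) ≤ (1/2)^(k+1)) := by
  classical
  set ε : ℝ := (1/2)^(k+1) with hεdef
  have hε : 0 < ε := by positivity
  have hεhalf : ε ≤ 1/2 := by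
    rw [hεdef]
    calc ((1:ℝ)/2)^(k+1) ≤ (1/2)^1 := by
          apply pow_le_pow_of_le_one (by norm_num) (by norm_num) (by omega)
    _ = 1/2 := by norm_num
  set M : ℕ := ⌈(8:ℝ)/ε⌉₊ with hMdef
  have hM8 : (8:ℝ)/ε ≤ M := Nat.le_ceil _
  have hM0 : 0 < M := Nat.ceil_pos.mpr (by positivity)
  have hMR : (0:ℝ) < M := by exact_mod_cast hM0
  obtain ⟨xp, hxp1, hxp2⟩ := ind_points hP (ι := {I // I ∈ L} × Fin M)
    (fun ji => ji.1.1) (fun ji => hL ji.1.1 ji.1.2)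
  obtain ⟨n, hn1, hn2⟩ := kronecker xp (fun ji => (ji.2 : ℝ)/M) hxp2
    (show (0:ℝ) < ε/8 by positivity)
    (show ε/8 ≤ 1/4 by linarith) N0
  have hnR : (0:ℝ) < (n:ℝ) + 1 := by positivity
  set r : {I // I ∈ L} × Fin M → ℝ := fun ji =>
    min ((xp ji - (ji.1.1 : ℝ × ℝ).1)/2) (min (((ji.1.1 : ℝ × ℝ).2 - xp ji)/2) (ε/(8*(n+1)))) with hrdef
  have hr0 : ∀ ji, 0 < r ji := by
    intro ji
    obtain ⟨h1, h2⟩ := (hxp1 ji).2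
    apply lt_min (by linarith)
    apply lt_min (by linarith)
    positivity
  have hrε : ∀ ji, (n:ℝ) * r ji ≤ ε/8 := by
    intro ji
    have h1 : r ji ≤ ε/(8*(n+1)) := le_trans (min_le_right _ _) (min_le_right _ _)
    have h2 : (n:ℝ) * r ji ≤ (n:ℝ) * (ε/(8*(n+1))) :=
      mul_le_mul_of_nonneg_left h1 (Nat.cast_nonneg n)
    calc (n:ℝ) * r ji ≤ (n:ℝ) * (ε/(8*(n+1))) := h2
    _ ≤ ε/8 := by
        rw [mul_div_assoc', div_le_div_iff₀ (by positivity) (by norm_num : (0:ℝ) < 8)]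
        nlinarith [hε, Nat.cast_nonneg (α := ℝ) n]
  set child : {I // I ∈ L} × Fin M → ℝ × ℝ := fun ji => (xp ji - r ji, xp ji + r ji) with hchild
  refine ⟨n, insert (z - δ/2, z + δ/2) (Finset.image child Finset.univ), hn1, ?_, ?_, ?_⟩
  · intro I hI
    rcases Finset.mem_insert.mp hI with rfl | hI2
    · exact ⟨z, hz, by constructor <;> · simp; linarith⟩
    · obtain ⟨ji, _, rfl⟩ := Finset.mem_image.mp hI2
      refine ⟨xp ji, (hxp1 ji).1, ?_⟩
      have := hr0 ji
      constructor <;> · simp [hchild]; linarith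
  · refine ⟨(z - δ/2, z + δ/2), Finset.mem_insert_self _ _, ?_⟩
    intro q hq
    obtain ⟨h1, h2⟩ := hq
    simp only at h1 h2
    rw [Metric.mem_ball, Real.dist_eq, abs_lt]
    constructor <;> linarith
  · intro I hI β
    obtain ⟨i, hi⟩ := net_lemma M hM0 β
    set ji : {I // I ∈ L} × Fin M := (⟨I, hI⟩, i) with hjidef
    obtain ⟨hxpP, hxpI1, hxpI2⟩ : xp ji ∈ P ∧ I.1 < xp ji ∧ xp ji < I.2 :=
      ⟨(hxp1 ji).1, (hxp1 ji).2.1, (hxp1 ji).2.2⟩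
    have hrji := hr0 ji
    have hr1 : r ji ≤ (xp ji - I.1)/2 := min_le_left _ _
    have hr2 : r ji ≤ (I.2 - xp ji)/2 := le_trans (min_le_right _ _) (min_le_left _ _)
    refine ⟨child ji,
      Finset.mem_insert_of_mem (Finset.mem_image_of_mem child (Finset.mem_univ ji)), ?_, ?_⟩
    · intro q hq
      obtain ⟨h1, h2⟩ := hq
      simp only [hchild] at h1 h2
      constructor <;> linarith
    · intro q hq
      obtain ⟨h1, h2⟩ := hq
      simp only [hchild] at h1 h2
      have hd1 : nintDist (β - (i:ℝ)/M) ≤ 1/(2*M) := hi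
      have hd2 : nintDist ((i:ℝ)/M - (n:ℝ) * xp ji) < ε/8 := by
        rw [show (i:ℝ)/M - (n:ℝ) * xp ji = -((n:ℝ) * xp ji - (i:ℝ)/M) by ring, nintDist_neg]
        exact hn2 ji
      have hd3 : nintDist ((n:ℝ) * xp ji - (n:ℝ) * q) ≤ ε/8 := by
        calc nintDist ((n:ℝ) * xp ji - (n:ℝ) * q) ≤ |(n:ℝ) * xp ji - (n:ℝ) * q| :=
              nintDist_le_abs _
        _ = (n:ℝ) * |xp ji - q| := by
              rw [← mul_sub, abs_mul, abs_of_nonneg (Nat.cast_nonneg n)]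
        _ ≤ (n:ℝ) * r ji := by
              apply mul_le_mul_of_nonneg_left ?_ (Nat.cast_nonneg n)
              rw [abs_le]
              constructor <;> linarith
        _ ≤ ε/8 := hrε ji
      have hsplit : β - (n:ℝ) * q
          = (β - (i:ℝ)/M) + (((i:ℝ)/M - (n:ℝ) * xp ji) + ((n:ℝ) * xp ji - (n:ℝ) * q)) := by
        ring
      have hM16 : 1/(2*(M:ℝ)) ≤ ε/16 := by
        rw [div_le_div_iff₀ (by positivity) (by norm_num)]
        rw [div_le_iff₀ (by positivity : (0:ℝ) < ε)] at hM8
        nlinarith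
      calc nintDist (β - (n:ℝ) * q)
          ≤ nintDist (β - (i:ℝ)/M) +
            nintDist (((i:ℝ)/M - (n:ℝ) * xp ji) + ((n:ℝ) * xp ji - (n:ℝ) * q)) := by
            rw [hsplit]; exact nintDist_add_le _ _
      _ ≤ nintDist (β - (i:ℝ)/M) + (nintDist ((i:ℝ)/M - (n:ℝ) * xp ji)
            + nintDist ((n:ℝ) * xp ji - (n:ℝ) * q)) := by
            have := nintDist_add_le ((i:ℝ)/M - (n:ℝ) * xp ji) ((n:ℝ) * xp ji - (n:ℝ) * q)
            linarith
      _ ≤ ε/16 + (ε/8 + ε/8) := by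
            have h4 : nintDist (β - (i:ℝ)/M) ≤ ε/16 := le_trans hd1 hM16
            linarith [hd2.le, hd3]
      _ ≤ ε := by linarith

theorem stmt3 (P : Set ℝ) (hP : Perfect P) (hne : P.Nonempty) :
    ∃ n : ℕ → ℕ, StrictMono n ∧
      ∀ y : ℝ, P ⊆ closure
        (P ∩ ((fun d => y - d) ''
          {x : ℝ | ∀ᶠ k in atTop, nintDist (n k * x) ≤ (1/2) ^ k})) := by
  classical
  -- a dense sequence in P
  obtain ⟨p, hpP, hpd⟩ : ∃ p : ℕ → ℝ, (∀ m, p m ∈ P) ∧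
      ∀ z ∈ P, ∀ δ : ℝ, 0 < δ → ∃ m, |z - p m| < δ := by
    haveI : Nonempty ↥P := hne.to_subtype
    obtain ⟨s, hsc, hsd⟩ := TopologicalSpace.exists_countable_dense ↥P
    obtain ⟨g, hg⟩ := Set.Countable.exists_eq_range hsc hsd.nonempty
    refine ⟨fun m => (g m : ℝ), fun m => (g m).2, ?_⟩
    intro z hz δ hδ
    have h1 : (⟨z, hz⟩ : ↥P) ∈ closure s := hsd _
    rw [Metric.mem_closure_iff] at h1
    obtain ⟨b, hbs, hbd⟩ := h1 δ hδ
    rw [hg] at hbs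
    obtain ⟨m, rfl⟩ := hbs
    exact ⟨m, by rwa [Subtype.dist_eq, Real.dist_eq] at hbd⟩
  set seedz : ℕ → ℝ := fun k => p (Nat.pairEquiv.symm k).1 with hseedzdef
  set seedδ : ℕ → ℝ := fun k => 1/(((Nat.pairEquiv.symm k).2 : ℝ) + 1) with hseedδdef
  have hseedz : ∀ k, seedz k ∈ P := fun k => hpP _
  have hseedδ : ∀ k, 0 < seedδ k := fun k => by positivity
  have hstep : ∀ (k : ℕ) (st : ℕ × Finset (ℝ × ℝ)),
      (∀ I ∈ st.2, (P ∩ Ioo I.1 I.2).Nonempty) →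
      ∃ st' : ℕ × Finset (ℝ × ℝ), (∀ I ∈ st'.2, (P ∩ Ioo I.1 I.2).Nonempty) ∧
        st.1 < st'.1 ∧
        (∃ I' ∈ st'.2, Icc I'.1 I'.2 ⊆ Metric.ball (seedz k) (seedδ k)) ∧
        (∀ I ∈ st.2, ∀ β : ℝ, ∃ I' ∈ st'.2, Icc I'.1 I'.2 ⊆ Ioo I.1 I.2 ∧
          ∀ q ∈ Icc I'.1 I'.2, nintDist (β - st'.1 * q) ≤ (1/2)^(k+1)) := by
    intro k st hst
    obtain ⟨n, L', h1, h2, h3, h4⟩ :=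
      step_lemma hP k st.1 st.2 hst (seedz k) (hseedz k) (hseedδ k)
    exact ⟨(n, L'), h2, h1, h3, h4⟩
  choose F hF1 hF2 hF3 hF4 using hstep
  let chain : ℕ → {st : ℕ × Finset (ℝ × ℝ) // ∀ I ∈ st.2, (P ∩ Ioo I.1 I.2).Nonempty} :=
    fun k => Nat.rec ⟨(0, (∅ : Finset (ℝ × ℝ))), by simp⟩
      (fun k ih => ⟨F k ih.1 ih.2, hF1 k ih.1 ih.2⟩) k
  have hchain : ∀ k, (chain (k+1)).1 = F k (chain k).1 (chain k).2 := fun k => rfl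
  set n : ℕ → ℕ := fun k => (chain k).1.1 with hndef
  have hmono : StrictMono n := by
    apply strictMono_nat_of_lt_succ
    intro k
    exact hF2 k (chain k).1 (chain k).2
  refine ⟨n, hmono, ?_⟩
  intro y z hzP
  rw [Metric.mem_closure_iff]
  intro δ hδ
  obtain ⟨mz, hmz⟩ := hpd z hzP (δ/2) (by linarith)
  obtain ⟨j, hj⟩ : ∃ j : ℕ, 1/((j:ℝ)+1) < δ/2 := exists_nat_one_div_lt (by linarith)
  set k0 := Nat.pairEquiv (mz, j) with hk0
  have hsz : seedz k0 = p mz := by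
    rw [hseedzdef]; simp only [hk0, Equiv.symm_apply_apply]
  have hsδ : seedδ k0 = 1/((j:ℝ)+1) := by
    rw [hseedδdef]; simp only [hk0, Equiv.symm_apply_apply]
  obtain ⟨I0, hI0mem, hI0sub⟩ := hF3 k0 (chain k0).1 (chain k0).2
  rw [← hchain k0] at hI0mem
  rw [hsz, hsδ] at hI0sub
  -- the descending chain of intervals
  let T : (m : ℕ) → {I : ℝ × ℝ // I ∈ (chain (k0+1+m)).1.2} :=
    fun m => Nat.rec (⟨I0, hI0mem⟩ : {I : ℝ × ℝ // I ∈ (chain (k0+1+0)).1.2})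
      (fun m ih =>
        ⟨Classical.choose (hF4 (k0+1+m) (chain (k0+1+m)).1 (chain (k0+1+m)).2 ih.1 ih.2
            ((n (k0+1+m+1) : ℝ) * y)),
         by
          have hs := Classical.choose_spec (hF4 (k0+1+m) (chain (k0+1+m)).1 (chain (k0+1+m)).2
            ih.1 ih.2 ((n (k0+1+m+1) : ℝ) * y))
          have : (chain (k0+1+(m+1))).1 = F (k0+1+m) (chain (k0+1+m)).1 (chain (k0+1+m)).2 := by
            rw [show k0+1+(m+1) = (k0+1+m)+1 by ring, hchain]
          rw [this]
          exact hs.1⟩) m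
  have hTspec : ∀ m : ℕ,
      Icc (T (m+1)).1.1 (T (m+1)).1.2 ⊆ Ioo (T m).1.1 (T m).1.2 ∧
      ∀ q ∈ Icc (T (m+1)).1.1 (T (m+1)).1.2,
        nintDist ((n (k0+1+m+1) : ℝ) * y - (F (k0+1+m) (chain (k0+1+m)).1 (chain (k0+1+m)).2).1 * q)
          ≤ (1/2)^(k0+1+m+1) := by
    intro m
    have hs := Classical.choose_spec (hF4 (k0+1+m) (chain (k0+1+m)).1 (chain (k0+1+m)).2
      (T m).1 (T m).2 ((n (k0+1+m+1) : ℝ) * y))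
    exact hs.2
  have hFn : ∀ m : ℕ, (F (k0+1+m) (chain (k0+1+m)).1 (chain (k0+1+m)).2).1 = (n (k0+1+m+1) : ℕ) := by
    intro m
    rfl
  -- compactness
  set Kset : ℕ → Set ℝ := fun m => Icc (T m).1.1 (T m).1.2 ∩ P with hKdef
  have hKne : ∀ m, (Kset m).Nonempty := by
    intro m
    obtain ⟨w, hw1, hw2⟩ := (chain (k0+1+m)).2 (T m).1 (T m).2
    exact ⟨w, ⟨le_of_lt hw2.1, le_of_lt hw2.2⟩, hw1⟩
  have hKdec : ∀ m, Kset (m+1) ⊆ Kset m := by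
    intro m w hw
    exact ⟨Ioo_subset_Icc_self ((hTspec m).1 hw.1), hw.2⟩
  obtain ⟨w, hw⟩ := IsCompact.nonempty_iInter_of_sequence_nonempty_isCompact_isClosed Kset hKdec hKne
    (isCompact_Icc.inter_right hP.closed) (fun m => isClosed_Icc.inter hP.closed)
  have hwm : ∀ m, w ∈ Kset m := fun m => mem_iInter.mp hw m
  have hwP : w ∈ P := (hwm 0).2
  -- distance to z
  have hwz : dist z w < δ := by
    have h1 : w ∈ Metric.ball (p mz) (1/((j:ℝ)+1)) := hI0sub (hwm 0).1
    rw [Metric.mem_ball, Real.dist_eq] at h1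
    rw [Real.dist_eq]
    have h2 : |z - w| ≤ |z - p mz| + |w - p mz| := by
      rw [show z - w = (z - p mz) - (w - p mz) by ring]
      exact abs_sub _ _
    calc |z - w| ≤ |z - p mz| + |w - p mz| := h2
    _ < δ/2 + δ/2 := by
        apply add_lt_add hmz (lt_trans h1 hj)
    _ = δ := by ring
  -- membership
  refine ⟨w, ⟨hwP, ⟨y - w, ?_, by simp⟩⟩, hwz⟩
  rw [mem_setOf_eq, eventually_atTop]
  refine ⟨k0+2, ?_⟩
  intro l hl
  obtain ⟨m, rfl⟩ : ∃ m, l = k0+1+m+1 := ⟨l - (k0+2), by omega⟩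
  have hq := (hTspec m).2 w (hwm (m+1)).1
  rw [hFn m] at hq
  have harg : (n (k0+1+m+1) : ℝ) * (y - w)
      = (n (k0+1+m+1) : ℝ) * y - (n (k0+1+m+1) : ℝ) * w := by ring
  rw [harg]
  exact hq
end

section
/- A set E ⊆ ℝ is a pseudo-Dirichlet set if and only if E is contained in the subgroup of (ℝ,+) generated by some Dirichlet set. -/
open MeasureTheory Filter Set

lemma nintDist_le_int (x : ℝ) (a : ℤ) : nintDist x ≤ |x - a| := round_le x a

lemma nintDist_zero : nintDist 0 = 0 := by simp [nintDist]

lemma nintDist_neg_le (x : ℝ) : nintDist (-x) ≤ nintDist x := by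
  calc nintDist (-x) ≤ |(-x) - ((-round x : ℤ) : ℝ)| := nintDist_le_int _ _
  _ = nintDist x := by push_cast; rw [show -x - (-(round x:ℝ)) = -(x - round x) by ring, abs_neg]; rfl

lemma easy_dir (D : Set ℝ) (hD : IsDirichlet D) (E : Set ℝ)
    (hE : E ⊆ (AddSubgroup.closure D : Set ℝ)) : IsPseudoDirichlet E := by
  obtain ⟨n, hn, hDn⟩ := hD
  refine ⟨fun k => n (2 * k), hn.comp (fun a b h => by omega), ?_⟩
  intro x hx
  have key : ∃ C : ℝ, 0 ≤ C ∧ ∀ k, nintDist (n k * x) ≤ C * (1/2)^k := by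
    refine AddSubgroup.closure_induction (p := fun y _ => ∃ C : ℝ, 0 ≤ C ∧
      ∀ k, nintDist (n k * y) ≤ C * (1/2)^k) ?_ ?_ ?_ ?_ (hE hx)
    · exact fun y hy => ⟨1, zero_le_one, fun k => by simpa using hDn y hy k⟩
    · exact ⟨0, le_refl _, fun k => by simp [nintDist_zero]⟩
    · rintro y z _ _ ⟨C₁, hC₁, h₁⟩ ⟨C₂, hC₂, h₂⟩
      refine ⟨C₁ + C₂, by positivity, fun k => ?_⟩
      calc nintDist (n k * (y + z)) = nintDist (n k * y + n k * z) := by ring_nf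
      _ ≤ nintDist (n k * y) + nintDist (n k * z) := nintDist_add_le _ _
      _ ≤ C₁ * (1/2)^k + C₂ * (1/2)^k := add_le_add (h₁ k) (h₂ k)
      _ = (C₁ + C₂) * (1/2)^k := by ring
    · rintro y _ ⟨C, hC, h⟩
      refine ⟨C, hC, fun k => ?_⟩
      calc nintDist (n k * (-y)) = nintDist (-(n k * y)) := by ring_nf
      _ ≤ nintDist (n k * y) := nintDist_neg_le _
      _ ≤ C * (1/2)^k := h k
  obtain ⟨C, hC0, hC⟩ := key
  rw [eventually_atTop]
  refine ⟨⌈C⌉₊, fun k hk => ?_⟩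
  calc nintDist (n (2*k) * x) ≤ C * (1/2)^(2*k) := hC (2*k)
  _ = (C * (1/2)^k) * (1/2)^k := by rw [two_mul, pow_add]; ring
  _ ≤ 1 * (1/2)^k := by
      apply mul_le_mul_of_nonneg_right _ (by positivity)
      rw [div_pow, one_pow, mul_one_div, div_le_one (by positivity)]
      calc C ≤ ⌈C⌉₊ := Nat.le_ceil C
      _ ≤ (k : ℝ) := by exact_mod_cast hk
      _ ≤ 2^k := by exact_mod_cast (Nat.lt_two_pow_self (n := k)).le
  _ = (1/2)^k := one_mul _

noncomputable def eta (k : ℕ) : ℝ := (1/2)^(3*k+6)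

lemma eta_pos (k : ℕ) : 0 < eta k := by unfold eta; positivity

lemma eta_le_one (k : ℕ) : eta k ≤ 1/2 := by
  unfold eta
  calc ((1:ℝ)/2)^(3*k+6) ≤ (1/2)^1 := by
        apply pow_le_pow_of_le_one (by norm_num) (by norm_num); omega
  _ = 1/2 := pow_one _

lemma eta_le (k j : ℕ) (h : j ≤ 3*k+6) : eta k ≤ (1/2)^j := by
  unfold eta
  exact pow_le_pow_of_le_one (by norm_num) (by norm_num) h

lemma clamp_props (b θ : ℝ) (hb : 0 ≤ b) :
    |max (-b) (min b θ)| ≤ b ∧ |θ - max (-b) (min b θ)| ≤ max 0 (|θ| - b) := by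
  rcases le_total θ (-b) with h1 | h1
  · rw [min_eq_right (by linarith), max_eq_left (by linarith)]
    constructor
    · rw [abs_neg, abs_of_nonneg hb]
    · have hθ : |θ| = -θ := abs_of_nonpos (by linarith)
      rw [hθ]
      have : |θ - -b| = -θ - b := by
        rw [abs_of_nonpos (by linarith)]; ring
      rw [this]
      exact le_max_right _ _
  · rcases le_total b θ with h2 | h2
    · rw [min_eq_left h2, max_eq_right (by linarith)]
      constructor
      · rw [abs_of_nonneg hb]
      · have hθ : |θ| = θ := abs_of_nonneg (by linarith)
        rw [hθ, abs_of_nonneg (by linarith)]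
        exact le_max_right _ _
    · rw [min_eq_right h2, max_eq_right h1]
      constructor
      · rw [abs_le]; exact ⟨h1, h2⟩
      · simpa using le_max_left 0 (|θ| - b)

noncomputable def nestedSeq (M : ℕ → ℝ) (c : ℕ → ℝ) : ℕ → ℝ
  | 0 => (c 0 - eta 0)/M 0
  | (k+1) => ((⌈M (k+1) * nestedSeq M c k - c (k+1) + eta (k+1)⌉ : ℤ) + c (k+1) - eta (k+1))/M (k+1)

lemma nested (M : ℕ → ℝ) (hM : ∀ k, 1 ≤ M k)
    (hgap : ∀ k, M k * 2^(3*k+7) ≤ M (k+1)) (c : ℕ → ℝ) :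
    ∃ v : ℝ, ∀ k, ∃ a : ℤ, |M k * v - (a + c k)| ≤ eta k := by
  set l := nestedSeq M c with hl
  have hMpos : ∀ k, (0:ℝ) < M k := fun k => lt_of_lt_of_le zero_lt_one (hM k)
  -- exact form of M k * l k
  have hform : ∀ k, ∃ a : ℤ, M k * l k = a + c k - eta k := by
    intro k
    cases k with
    | zero =>
      refine ⟨0, ?_⟩
      show M 0 * ((c 0 - eta 0)/M 0) = _
      rw [mul_div_cancel₀ _ (hMpos 0).ne']
      push_cast; ring
    | succ k =>
      refine ⟨⌈M (k+1) * l k - c (k+1) + eta (k+1)⌉, ?_⟩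
      show M (k+1) * ((_ + c (k+1) - eta (k+1))/M (k+1)) = _
      rw [mul_div_cancel₀ _ (hMpos (k+1)).ne']
  -- monotonicity
  have hA : ∀ k, l k ≤ l (k+1) := by
    intro k
    show l k ≤ ((⌈M (k+1) * l k - c (k+1) + eta (k+1)⌉ : ℤ) + c (k+1) - eta (k+1))/M (k+1)
    rw [le_div_iff₀ (hMpos (k+1))]
    have := Int.le_ceil (M (k+1) * l k - c (k+1) + eta (k+1))
    linarith
  have hB : ∀ k, l (k+1) + 2 * eta (k+1) / M (k+1) ≤ l k + 2 * eta k / M k := by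
    intro k
    have hceil := Int.ceil_lt_add_one (M (k+1) * l k - c (k+1) + eta (k+1))
    have h1 : l (k+1) + 2 * eta (k+1) / M (k+1)
        = ((⌈M (k+1) * l k - c (k+1) + eta (k+1)⌉ : ℤ) + c (k+1) + eta (k+1))/M (k+1) := by
      show ((_ : ℝ) + c (k+1) - eta (k+1))/M (k+1) + 2 * eta (k+1) / M (k+1) = _
      field_simp
      ring
    rw [h1]
    rw [div_le_iff₀ (hMpos (k+1))]
    have h2 : (2 : ℝ) / M (k+1) ≤ 2 * eta k / M k := by
      rw [div_le_div_iff₀ (hMpos (k+1)) (hMpos k)]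
      have : M k * 2^(3*k+7) ≤ M (k+1) := hgap k
      have he : eta k * 2^(3*k+7) = 2 := by
        have h0 : ((1:ℝ)/2)^(3*k+6) * 2^(3*k+6) = 1 := by
          rw [← mul_pow]; norm_num
        have h7 : (2:ℝ)^(3*k+7) = 2^(3*k+6) * 2 := by
          have h8 : 3*k+7 = (3*k+6)+1 := by omega
          rw [h8, pow_succ]
        unfold eta
        rw [h7, ← mul_assoc, h0, one_mul]
      have h4 : M k * (eta k * 2^(3*k+7)) ≤ eta k * M (k+1) := by
        nlinarith [mul_le_mul_of_nonneg_left (hgap k) (eta_pos k).le]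
      rw [he] at h4
      nlinarith [mul_nonneg (eta_pos k).le (hMpos (k+1)).le]
    have heta1 : eta (k+1) ≤ 1/2 := eta_le_one _
    have h3 : ((⌈M (k+1) * l k - c (k+1) + eta (k+1)⌉ : ℤ) : ℝ) + c (k+1) + eta (k+1)
        ≤ M (k+1) * l k + 2 := by linarith
    have h7 : M (k+1) * (2 / M (k+1)) = 2 := by
      rw [mul_comm]; exact div_mul_cancel₀ 2 (hMpos (k+1)).ne'
    have h5 : (2:ℝ) ≤ M (k+1) * (2 * eta k / M k) := by
      have h6 := mul_le_mul_of_nonneg_left h2 (hMpos (k+1)).le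
      linarith
    calc ((⌈M (k+1) * l k - c (k+1) + eta (k+1)⌉ : ℤ) : ℝ) + c (k+1) + eta (k+1)
        ≤ M (k+1) * l k + 2 := h3
    _ ≤ M (k+1) * l k + M (k+1) * (2 * eta k / M k) := by linarith
    _ = (l k + 2 * eta k / M k) * M (k+1) := by ring
  -- nested compact intervals
  set t : ℕ → Set ℝ := fun k => Icc (l k) (l k + 2 * eta k / M k) with ht
  have hne : (⋂ k, t k).Nonempty := by
    apply IsCompact.nonempty_iInter_of_sequence_nonempty_isCompact_isClosed t
    · intro k
      exact Icc_subset_Icc (hA k) (hB k)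
    · intro k
      refine nonempty_Icc.2 ?_
      have h1 : 0 ≤ 2 * eta k / M k :=
        div_nonneg (by linarith [eta_pos k]) (hMpos k).le
      linarith
    · exact isCompact_Icc
    · intro k; exact isClosed_Icc
  obtain ⟨v, hv⟩ := hne
  refine ⟨v, fun k => ?_⟩
  obtain ⟨a, ha⟩ := hform k
  refine ⟨a, ?_⟩
  have hvk : v ∈ t k := mem_iInter.1 hv k
  obtain ⟨h1, h2⟩ := hvk
  rw [abs_le]
  constructor
  · have := mul_le_mul_of_nonneg_left h1 (hMpos k).le
    rw [ha] at this
    have hp := (eta_pos k).le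
    linarith
  · have hq : M k * (2 * eta k / M k) = 2 * eta k := by
      rw [mul_comm]; exact div_mul_cancel₀ _ (hMpos k).ne'
    have h2' := mul_le_mul_of_nonneg_left h2 (hMpos k).le
    rw [mul_add, ha, hq] at h2'
    linarith

lemma hard_dir (E : Set ℝ) (hE : IsPseudoDirichlet E) :
    ∃ D : Set ℝ, IsDirichlet D ∧ E ⊆ (AddSubgroup.closure D : Set ℝ) := by
  obtain ⟨n, hn, hP⟩ := hE
  -- construct the fast-growing index function f
  let f : ℕ → ℕ := fun k => Nat.recAux 1 (fun k fk => max (fk + 1) (2^(3*k+7) * n fk + 1)) k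
  have hf1 : ∀ k, f k + 1 ≤ f (k+1) := fun k => le_max_left _ _
  have hgapn : ∀ k, 2^(3*k+7) * n (f k) + 1 ≤ f (k+1) := fun k => le_max_right _ _
  have hfk : ∀ k, k + 1 ≤ f k := by
    intro k
    induction k with
    | zero => exact le_refl 1
    | succ k ih => have := hf1 k; omega
  set M : ℕ → ℝ := fun k => ((n (f k) : ℕ) : ℝ) with hMdef
  have hM1 : ∀ k, (1:ℝ) ≤ M k := by
    intro k
    have h1 : f k ≤ n (f k) := hn.le_apply
    have h2 := hfk k
    have h3 : 1 ≤ n (f k) := by omega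
    show (1:ℝ) ≤ ((n (f k) : ℕ) : ℝ)
    exact_mod_cast h3
  have hMpos : ∀ k, (0:ℝ) < M k := fun k => lt_of_lt_of_le zero_lt_one (hM1 k)
  have hgapM : ∀ k, M k * 2^(3*k+7) ≤ M (k+1) := by
    intro k
    have h1 := hgapn k
    have h2 : f (k+1) ≤ n (f (k+1)) := hn.le_apply
    have h3 : 2^(3*k+7) * n (f k) ≤ n (f (k+1)) := by omega
    calc M k * 2^(3*k+7) = ((2^(3*k+7) * n (f k) : ℕ) : ℝ) := by push_cast; ring
    _ ≤ M (k+1) := by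
        show ((2 ^ (3 * k + 7) * n (f k) : ℕ) : ℝ) ≤ ((n (f (k+1)) : ℕ) : ℝ)
        exact_mod_cast h3
  -- the Dirichlet set
  set D : Set ℝ := {v : ℝ | ∀ k : ℕ, nintDist (M k * v) ≤ (1/2)^k} with hDdef
  have hDir : IsDirichlet D := by
    refine ⟨fun k => n (f k), hn.comp (strictMono_nat_of_lt_succ (fun k => by have := hf1 k; omega)), ?_⟩
    intro v hv k
    exact hv k
  refine ⟨D, hDir, ?_⟩
  -- the one-step correction
  have step : ∀ r : ℝ, ∃ v, v ∈ D ∧ ∀ k,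
      nintDist (M k * (r - v)) ≤ max 0 (nintDist (M k * r) - (1/2)^(k+1)) + eta k := by
    intro r
    set θ : ℕ → ℝ := fun k => M k * r - round (M k * r) with hθdef
    set c : ℕ → ℝ := fun k => max (-(1/2:ℝ)^(k+1)) (min ((1/2:ℝ)^(k+1)) (θ k)) with hcdef
    obtain ⟨v, hv⟩ := nested M hM1 hgapM c
    have hb : ∀ k : ℕ, (0:ℝ) ≤ (1/2)^(k+1) := fun k => by positivity
    have hclamp := fun k => clamp_props ((1/2:ℝ)^(k+1)) (θ k) (hb k)
    refine ⟨v, ?_, ?_⟩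
    · intro k
      obtain ⟨a, ha⟩ := hv k
      calc nintDist (M k * v) ≤ |M k * v - a| := nintDist_le_int _ a
      _ = |(M k * v - (a + c k)) + c k| := by ring_nf
      _ ≤ |M k * v - (a + c k)| + |c k| := abs_add_le _ _
      _ ≤ eta k + (1/2)^(k+1) := add_le_add ha (hclamp k).1
      _ ≤ (1/2)^(k+1) + (1/2)^(k+1) := by
          have := eta_le k (k+1) (by omega); linarith
      _ = (1/2)^k := by rw [pow_succ]; ring
    · intro k
      obtain ⟨a, ha⟩ := hv k
      have hnd : nintDist (M k * r) = |θ k| := rfl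
      calc nintDist (M k * (r - v)) ≤ |M k * (r - v) - ((round (M k * r) - a : ℤ) : ℝ)| :=
            nintDist_le_int _ _
      _ = |(θ k - c k) - (M k * v - (a + c k))| := by
          congr 1
          push_cast
          show M k * (r - v) - ((round (M k * r) : ℝ) - a) = _
          have : θ k = M k * r - round (M k * r) := rfl
          rw [this]; ring
      _ ≤ |θ k - c k| + |M k * v - (a + c k)| := abs_sub _ _
      _ ≤ max 0 (|θ k| - (1/2)^(k+1)) + eta k := add_le_add (hclamp k).2 ha
      _ = max 0 (nintDist (M k * r) - (1/2)^(k+1)) + eta k := by rw [hnd]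
  choose F hF1 hF2 using step
  intro x hx
  obtain ⟨K, hK⟩ := eventually_atTop.1 (hP x hx)
  -- the sequence of residuals
  set r : ℕ → ℝ := fun i => Nat.recAux x (fun _ ri => ri - F ri) i with hrdef
  have hr0 : r 0 = x := rfl
  have hrs : ∀ i, r (i+1) = r i - F (r i) := fun i => rfl
  -- invariant 1 : all levels decay linearly
  have inv1 : ∀ i k, nintDist (M k * r i) ≤ max ((1/2:ℝ)^(k+1)) (1/2 - (i:ℝ) * (1/2)^(k+2)) := by
    intro i
    induction i with
    | zero =>
      intro k
      have := nintDist_le_half (M k * r 0)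
      have h2 : (1:ℝ)/2 = 1/2 - ((0:ℕ):ℝ) * (1/2)^(k+2) := by push_cast; ring
      calc nintDist (M k * r 0) ≤ 1/2 := this
      _ = 1/2 - ((0:ℕ):ℝ) * (1/2)^(k+2) := h2
      _ ≤ _ := le_max_right _ _
    | succ i ih =>
      intro k
      have hdec := hF2 (r i) k
      rw [← hrs i] at hdec
      set φ := nintDist (M k * r i) with hφ
      have hφ0 : 0 ≤ φ := abs_nonneg _
      have heta : eta k ≤ (1/2)^(k+2) := eta_le k (k+2) (by omega)
      have hpow : ((1:ℝ)/2)^(k+1) = (1/2)^(k+2) + (1/2)^(k+2) := by rw [pow_succ]; ring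
      have hpow2 : (0:ℝ) < (1/2:ℝ)^(k+2) := by positivity
      rcases le_or_gt φ ((1/2)^(k+1)) with hc | hc
      · have hmax : max 0 (φ - (1/2)^(k+1)) = 0 := max_eq_left (by linarith)
        rw [hmax] at hdec
        calc nintDist (M k * r (i+1)) ≤ 0 + eta k := hdec
        _ ≤ (1/2)^(k+1) := by linarith
        _ ≤ _ := le_max_left _ _
      · have hmax : max 0 (φ - (1/2)^(k+1)) = φ - (1/2)^(k+1) := max_eq_right (by linarith)
        rw [hmax] at hdec
        have hφle : φ ≤ 1/2 - (i:ℝ) * (1/2)^(k+2) := by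
          rcases max_cases ((1/2:ℝ)^(k+1)) (1/2 - (i:ℝ) * (1/2)^(k+2)) with ⟨heq, _⟩ | ⟨heq, hlt⟩
          · have ihk := ih k; rw [heq] at ihk; exact absurd ihk (not_le.2 hc)
          · have ihk := ih k; rw [heq] at ihk; exact ihk
        calc nintDist (M k * r (i+1)) ≤ φ - (1/2)^(k+1) + eta k := hdec
        _ ≤ 1/2 - ((i+1 : ℕ):ℝ) * (1/2)^(k+2) := by push_cast; rw [hpow] at hc ⊢; linarith
        _ ≤ _ := le_max_right _ _
  -- invariant 2 : high levels stay small
  have inv2 : ∀ i k, K ≤ k → nintDist (M k * r i) ≤ (1/2)^(k+1) := by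
    intro i
    induction i with
    | zero =>
      intro k hk
      have hfK : K ≤ f k := by have := hfk k; omega
      have h1 : nintDist (M k * x) ≤ (1/2)^(f k) := hK (f k) hfK
      calc nintDist (M k * r 0) ≤ (1/2)^(f k) := h1
      _ ≤ (1/2)^(k+1) := pow_le_pow_of_le_one (by norm_num) (by norm_num) (hfk k)
    | succ i ih =>
      intro k hk
      have hdec := hF2 (r i) k
      rw [← hrs i] at hdec
      have hφ := ih k hk
      have hmax : max 0 (nintDist (M k * r i) - (1/2)^(k+1)) = 0 := max_eq_left (by linarith)
      rw [hmax] at hdec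
      have heta : eta k ≤ (1/2)^(k+1) := eta_le k (k+1) (by omega)
      linarith
  -- after 2^(K+1) steps the residual is in D
  have hrS : r (2^(K+1)) ∈ D := by
    intro k
    rcases le_or_gt K k with hk | hk
    · have := inv2 (2^(K+1)) k hk
      calc nintDist (M k * r (2^(K+1))) ≤ (1/2)^(k+1) := this
      _ ≤ (1/2)^k := pow_le_pow_of_le_one (by norm_num) (by norm_num) (by omega)
    · have h1 := inv1 (2^(K+1)) k
      have h2 : (1:ℝ)/2 - ((2^(K+1) : ℕ):ℝ) * (1/2)^(k+2) ≤ 0 := by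
        have h3 : ((1:ℝ)/2) ≤ ((2^(K+1) : ℕ) : ℝ) * (1/2)^(k+2) := by
          push_cast
          rw [div_pow, one_pow, mul_one_div, le_div_iff₀ (by positivity)]
          calc (1:ℝ)/2 * 2^(k+2) = 2^(k+1) := by rw [pow_succ]; ring
          _ ≤ 2^(K+1) := by
              apply pow_le_pow_right₀ (by norm_num)
              omega
        linarith
      have h4 : max ((1/2:ℝ)^(k+1)) (1/2 - ((2^(K+1) : ℕ):ℝ) * (1/2)^(k+2)) ≤ (1/2)^(k+1) := by
        apply max_le (le_refl _)
        have : (0:ℝ) ≤ (1/2:ℝ)^(k+1) := by positivity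
        linarith
      calc nintDist (M k * r (2^(K+1))) ≤ _ := h1
      _ ≤ (1/2)^(k+1) := h4
      _ ≤ (1/2)^k := pow_le_pow_of_le_one (by norm_num) (by norm_num) (by omega)
  -- conclude : x is in the subgroup generated by D
  have hsum : ∀ i, x - r i ∈ AddSubgroup.closure D := by
    intro i
    induction i with
    | zero => rw [hr0]; simpa using (AddSubgroup.closure D).zero_mem
    | succ i ih =>
      have : x - r (i+1) = (x - r i) + F (r i) := by rw [hrs i]; ring
      rw [this]
      exact (AddSubgroup.closure D).add_mem ih (AddSubgroup.subset_closure (hF1 (r i)))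
  have : x = (x - r (2^(K+1))) + r (2^(K+1)) := by ring
  rw [this]
  exact (AddSubgroup.closure D).add_mem (hsum _) (AddSubgroup.subset_closure hrS)

theorem stmt8 (E : Set ℝ) :
    IsPseudoDirichlet E ↔
      ∃ D : Set ℝ, IsDirichlet D ∧ E ⊆ (AddSubgroup.closure D : Set ℝ) := by
  constructor
  · exact hard_dir E
  · rintro ⟨D, hD, hsub⟩
    exact easy_dir D hD E hsub
end

section
/- For every Arbault set E ⊆ ℝ there exists an F_σ set F ⊇ E such that E + F ≠ ℝ. Concretely, if (n_k) witnesses that E is an Arbault set, then F = {x : ‖n_k·x‖ ≤ 1/8 for all but finitely many k} is F_σ, contains E, and F + F ≠ ℝ. -/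
open MeasureTheory Filter Set Pointwise

lemma nintDist_eq_norm (x : ℝ) : nintDist x = ‖(x : UnitAddCircle)‖ :=
  (UnitAddCircle.norm_eq).symm

lemma nintDist_add_le_s10 (a b : ℝ) : nintDist (a + b) ≤ nintDist a + nintDist b := by
  simp only [nintDist_eq_norm]
  exact norm_add_le (a : UnitAddCircle) (b : UnitAddCircle)

lemma nintDist_nat_smul (m : ℕ) (z : ℝ) :
    nintDist (m * z) = ‖(m : ℤ) • (z : UnitAddCircle)‖ := by
  rw [nintDist_eq_norm, ← AddCircle.coe_zsmul 1]
  norm_num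

/-- There exists a real number with `nintDist (n k * z) > 1/4` for infinitely many `k`. -/
lemma exists_freq_large (n : ℕ → ℕ) (hn : StrictMono n) :
    ∃ z : ℝ, ∀ N : ℕ, ∃ k, N ≤ k ∧ 1/4 < nintDist (n k * z) := by
  set T : ℕ → Set UnitAddCircle :=
    fun k => (fun y => (n k : ℤ) • y) ⁻¹' Metric.closedBall 0 (1/4) with hT
  set A : ℕ → Set UnitAddCircle := fun N => ⋂ k, ⋂ (_ : N + 1 ≤ k), T k with hA
  have hTvol : ∀ k, 1 ≤ k → volume (T k) = ENNReal.ofReal (1/2) := by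
    intro k hk
    have hnk : (n k : ℤ) ≠ 0 := by
      have h1 : k ≤ n k := hn.le_apply
      omega
    have hmp := MeasureTheory.Measure.measurePreserving_zsmul
      (volume : Measure UnitAddCircle) hnk
    rw [hmp.measure_preimage measurableSet_closedBall.nullMeasurableSet,
      AddCircle.volume_closedBall]
    norm_num
  have hAvol : ∀ N, volume (A N) ≤ ENNReal.ofReal (1/2) := by
    intro N
    have hsub : A N ⊆ T (N + 1) := by
      intro y hy
      simp only [hA, Set.mem_iInter] at hy
      exact hy (N + 1) le_rfl
    calc volume (A N) ≤ volume (T (N + 1)) := measure_mono hsub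
      _ = ENNReal.ofReal (1/2) := hTvol (N + 1) (by omega)
  have hmono : Monotone A := by
    intro N M hNM y hy
    simp only [hA, Set.mem_iInter] at hy ⊢
    intro k hk
    exact hy k (by omega)
  have hne : (⋃ N, A N) ≠ Set.univ := by
    intro h
    have h1 : volume (⋃ N, A N) = ⨆ N, volume (A N) :=
      Directed.measure_iUnion hmono.directed_le
    have h2 : volume (⋃ N, A N) ≤ ENNReal.ofReal (1/2) := by
      rw [h1]; exact iSup_le hAvol
    rw [h, UnitAddCircle.measure_univ] at h2
    have : (1 : ENNReal) ≤ ENNReal.ofReal (1/2) := h2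
    rw [ENNReal.one_le_ofReal] at this
    norm_num at this
  obtain ⟨y, hy⟩ : ∃ y : UnitAddCircle, y ∉ ⋃ N, A N := by
    by_contra h
    push_neg at h
    exact hne (Set.eq_univ_of_forall h)
  obtain ⟨z, rfl⟩ : ∃ z : ℝ, (z : UnitAddCircle) = y := Quotient.exists_rep y
  refine ⟨z, fun N => ?_⟩
  have hyN : (z : UnitAddCircle) ∉ A N := fun h => hy (Set.mem_iUnion.2 ⟨N, h⟩)
  simp only [hA, Set.mem_iInter, not_forall] at hyN
  obtain ⟨k, hk, hk2⟩ := hyN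
  refine ⟨k, by omega, ?_⟩
  rw [nintDist_nat_smul]
  by_contra hle
  push_neg at hle
  exact hk2 (by simpa [hT, Metric.mem_closedBall, dist_zero_right] using hle)

theorem stmt10 (E : Set ℝ) (n : ℕ → ℕ) (hn : StrictMono n)
    (hE : ∀ x ∈ E, Tendsto (fun k => nintDist (n k * x)) atTop (nhds 0)) :
    IsFsigma {x : ℝ | ∀ᶠ k in atTop, nintDist (n k * x) ≤ 1/8} ∧
    E ⊆ {x : ℝ | ∀ᶠ k in atTop, nintDist (n k * x) ≤ 1/8} ∧
    {x : ℝ | ∀ᶠ k in atTop, nintDist (n k * x) ≤ 1/8} +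
      {x : ℝ | ∀ᶠ k in atTop, nintDist (n k * x) ≤ 1/8} ≠ Set.univ ∧
    E + {x : ℝ | ∀ᶠ k in atTop, nintDist (n k * x) ≤ 1/8} ≠ Set.univ := by
  set F : Set ℝ := {x : ℝ | ∀ᶠ k in atTop, nintDist (n k * x) ≤ 1/8} with hF
  have hEF : E ⊆ F := by
    intro x hx
    have := (hE x hx).eventually (eventually_le_nhds (by norm_num : (0:ℝ) < 1/8))
    exact this
  have hFsig : IsFsigma F := by
    refine ⟨fun N => ⋂ k, ⋂ (_ : N ≤ k),
      (fun x : ℝ => ((↑(n k) * x : ℝ) : UnitAddCircle)) ⁻¹' Metric.closedBall 0 (1/8),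
      fun N => ?_, ?_⟩
    · refine isClosed_iInter fun k => isClosed_iInter fun _ => ?_
      exact Metric.isClosed_closedBall.preimage
        ((AddCircle.continuous_mk' 1).comp (continuous_const.mul continuous_id))
    · ext x
      simp only [hF, Set.mem_setOf_eq, eventually_atTop, Set.mem_iUnion, Set.mem_iInter,
        Set.mem_preimage, Metric.mem_closedBall, dist_zero_right, ← nintDist_eq_norm]
  have hFF : F + F ≠ Set.univ := by
    obtain ⟨z, hz⟩ := exists_freq_large n hn
    intro h
    have hzmem : z ∈ F + F := h ▸ Set.mem_univ z
    obtain ⟨x, hx, y, hyF, hxy⟩ := Set.mem_add.1 hzmem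
    have hev : ∀ᶠ k in atTop, nintDist (n k * z) ≤ 1/4 := by
      filter_upwards [hx, hyF] with k h1 h2
      have : nintDist (n k * z) ≤ nintDist (n k * x) + nintDist (n k * y) := by
        rw [← hxy]
        calc nintDist (n k * (x + y)) = nintDist (n k * x + n k * y) := by ring_nf
          _ ≤ _ := nintDist_add_le_s10 _ _
      linarith
    obtain ⟨N, hN⟩ := eventually_atTop.1 hev
    obtain ⟨k, hk1, hk2⟩ := hz N
    have := hN k hk1
    linarith
  refine ⟨hFsig, hEF, hFF, ?_⟩
  intro h
  apply hFF
  apply Set.eq_univ_of_univ_subset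
  rw [← h]
  exact Set.add_subset_add_right hEF
end

section
/- Let (n_k) be a strictly increasing sequence of natural numbers and set H = {x ∈ ℝ : ‖n_k·x‖ ≤ 1/4 for all but finitely many k}. Then the Lebesgue measure of H ∩ [0,1] is at most 1/2; in particular H ≠ ℝ. -/
open MeasureTheory Filter Set

lemma measurable_nintDist : Measurable nintDist := by
  have h : nintDist = fun x : ℝ => |Int.fract (x + 1/2) - 1/2| := by
    funext x
    have : round x = ⌊x + 1/2⌋ := round_eq x
    simp only [nintDist, this, Int.fract]
    ring_nf
  rw [h]
  exact (measurable_fract.comp (measurable_id.add_const _)).sub_const _ |>.abs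

lemma nintDist_add_int (y : ℝ) (k : ℤ) : nintDist (y + k) = nintDist y := by
  simp only [nintDist, round_add_intCast, Int.cast_add]; ring_nf

lemma key (m : ℕ) (hm : 1 ≤ m) :
    volume ({x : ℝ | nintDist (m * x) ≤ 1/4} ∩ Icc 0 1) ≤ 1/2 := by
  have hm0 : (0:ℝ) < m := by exact_mod_cast hm
  have hm1 : (1:ℝ) ≤ m := by exact_mod_cast hm
  set c : ℝ := 1/(2*m) with hc_def
  have hc0 : 0 < c := by positivity
  have hc1 : c ≤ 1/2 := by
    rw [hc_def, div_le_div_iff₀ (by positivity) (by norm_num)]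
    linarith
  have hmc : (m:ℝ) * c = 1/2 := by rw [hc_def]; field_simp
  set B : Set ℝ := {x : ℝ | nintDist (m * x) ≤ 1/4} ∩ Icc 0 1 with hB
  set E : Set ℝ := {x : ℝ | nintDist (m * x - 1/2) ≤ 1/4} ∩ Icc 0 1 with hE
  have hmeas1 : Measurable fun x : ℝ => nintDist (m * x) :=
    measurable_nintDist.comp (measurable_id.const_mul _)
  have hBmeas : MeasurableSet B :=
    (measurableSet_le hmeas1 measurable_const).inter measurableSet_Icc
  -- Step 1 : volume B ≤ volume E
  have hμBE : volume B ≤ volume E := by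
    set T : Set ℝ := (fun x => x + (-c)) ⁻¹' B with hT
    have hTmeas : MeasurableSet T := hBmeas.preimage (measurable_id.add_const _)
    have hTvol : volume T = volume B := measure_preimage_add_right _ _ _
    set P : Set ℝ := T ∩ Icc c 1 with hP
    set R : Set ℝ := T ∩ Ioi 1 with hR
    set Q : Set ℝ := (fun x => x + 1) ⁻¹' R with hQ
    have hQvol : volume Q = volume R := measure_preimage_add_right _ _ _
    have hTsplit : T = P ∪ R := by
      ext x
      constructor
      · intro hx
        have hx' : x + -c ∈ Icc (0:ℝ) 1 := hx.2
        rcases le_or_gt x 1 with h | h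
        · exact Or.inl ⟨hx, ⟨by linarith [hx'.1], h⟩⟩
        · exact Or.inr ⟨hx, h⟩
      · rintro (hx | hx) <;> exact hx.1
    have hPRdisj : Disjoint P R := by
      rw [Set.disjoint_left]
      rintro x ⟨_, hx1⟩ ⟨_, hx2⟩
      exact absurd hx1.2 (not_le.mpr hx2)
    have hPR : volume T = volume P + volume R := by
      rw [hTsplit, measure_union hPRdisj (hTmeas.inter measurableSet_Ioi)]
    have hPmeas : MeasurableSet P := hTmeas.inter measurableSet_Icc
    have hPsub : P ⊆ E := by
      rintro x ⟨hxT, hxI⟩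
      have h1 : nintDist (m * (x + -c)) ≤ 1/4 := hxT.1
      have harg : (m:ℝ) * (x + -c) = m * x - 1/2 := by rw [mul_add]; rw [mul_neg, hmc]; ring
      rw [harg] at h1
      exact ⟨h1, ⟨le_trans hc0.le hxI.1, hxI.2⟩⟩
    have hQsub : Q ⊆ E := by
      rintro x ⟨hxT, hxgt⟩
      have hx' : x + 1 + -c ∈ Icc (0:ℝ) 1 := hxT.2
      have h1 : nintDist (m * (x + 1 + -c)) ≤ 1/4 := hxT.1
      have harg : (m:ℝ) * (x + 1 + -c) = (m * x - 1/2) + ((m:ℤ):ℝ) := by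
        push_cast; rw [mul_add, mul_add, mul_neg, hmc]; ring
      rw [harg, nintDist_add_int] at h1
      have hxgt' : (1:ℝ) < x + 1 := hxgt
      exact ⟨h1, ⟨by linarith, by linarith [hx'.2]⟩⟩
    have hPQcap : P ∩ Q ⊆ {c} := by
      rintro x ⟨⟨_, hxP⟩, ⟨hxT, _⟩⟩
      have hx' : x + 1 + -c ∈ Icc (0:ℝ) 1 := hxT.2
      have : x = c := le_antisymm (by linarith [hx'.2]) hxP.1
      exact this
    calc volume B = volume T := hTvol.symm
      _ = volume P + volume R := hPR
      _ = volume P + volume Q := by rw [hQvol]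
      _ = volume (P ∪ Q) + volume (P ∩ Q) := (measure_union_add_inter' hPmeas Q).symm
      _ ≤ volume E + 0 := by
          refine add_le_add (measure_mono (union_subset hPsub hQsub)) ?_
          exact le_trans (measure_mono hPQcap) (le_of_eq (measure_singleton c))
      _ = volume E := add_zero _
  -- Step 2 : B ∩ E is countable hence null
  have hBEcap : volume (B ∩ E) = 0 := by
    have hsub : B ∩ E ⊆
        (range (fun j : ℤ => ((j:ℝ) + 1/4)/m)) ∪ (range (fun j : ℤ => ((j:ℝ) - 1/4)/m)) := by
      rintro x ⟨⟨hx1, _⟩, ⟨hx2, _⟩⟩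
      have hu : |(m:ℝ) * x - round ((m:ℝ) * x)| ≤ 1/4 := hx1
      have hv : |((m:ℝ) * x - 1/2) - round ((m:ℝ) * x - 1/2)| ≤ 1/4 := hx2
      set y : ℝ := (m:ℝ) * x with hy
      set d : ℤ := round y - round (y - 1/2) with hd
      have huv : (y - round y) - ((y - 1/2) - round (y - 1/2)) = 1/2 - d := by
        push_cast [hd]; ring
      have habs : |(1:ℝ)/2 - d| ≤ 1/2 := by
        rw [← huv]
        calc |(y - round y) - ((y - 1/2) - round (y - 1/2))|
            ≤ |y - round y| + |(y - 1/2) - round (y - 1/2)| := abs_sub _ _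
          _ ≤ 1/2 := by linarith
      have hd01 : d = 0 ∨ d = 1 := by
        rw [abs_le] at habs
        have h0 : (0:ℝ) ≤ d := by linarith
        have h1 : (d:ℝ) ≤ 1 := by linarith
        have h0' : (0:ℤ) ≤ d := by exact_mod_cast h0
        have h1' : d ≤ 1 := by exact_mod_cast h1
        omega
      rw [abs_le] at hu hv
      rcases hd01 with h | h
      · -- d = 0 : u = 1/4
        have hd0 : (round y : ℝ) = round (y - 1/2) := by
          have : (d:ℝ) = 0 := by exact_mod_cast congrArg (Int.cast : ℤ → ℝ) h
          push_cast [hd] at this; linarith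
        have hu14 : y - round y = 1/4 := by
          have := huv; rw [h] at this; push_cast at this
          linarith [hu.2, hv.1, hu.1, hv.2]
        left
        refine ⟨round y, ?_⟩
        have : y = (round y : ℝ) + 1/4 := by linarith
        rw [hy] at this
        field_simp
        linarith
      · -- d = 1 : u = -1/4
        have hu14 : y - round y = -(1/4) := by
          have h' := huv; rw [h] at h'; push_cast at h'
          have hv2 := hv.2
          linarith [hu.1]
        right
        refine ⟨round y, ?_⟩
        have : y = (round y : ℝ) - 1/4 := by linarith
        rw [hy] at this
        field_simp
        linarith
    exact measure_mono_null hsub (((countable_range _).union (countable_range _)).measure_zero _)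
  -- Step 3 : conclusion
  have h1 : volume B + volume B ≤ 1 := by
    calc volume B + volume B ≤ volume B + volume E := add_le_add_right hμBE _
      _ = volume (B ∪ E) + volume (B ∩ E) := (measure_union_add_inter' hBmeas E).symm
      _ = volume (B ∪ E) := by rw [hBEcap, add_zero]
      _ ≤ volume (Icc (0:ℝ) 1) :=
          measure_mono (union_subset inter_subset_right inter_subset_right)
      _ = 1 := by rw [Real.volume_Icc]; norm_num
  rw [ENNReal.le_div_iff_mul_le (Or.inl two_ne_zero) (Or.inl ENNReal.ofNat_ne_top), mul_two]
  exact h1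

theorem stmt11 (n : ℕ → ℕ) (hn : StrictMono n) :
    volume ({x : ℝ | ∀ᶠ k in atTop, nintDist (n k * x) ≤ 1/4} ∩ Set.Icc 0 1)
      ≤ 1/2 ∧
    {x : ℝ | ∀ᶠ k in atTop, nintDist (n k * x) ≤ 1/4} ≠ Set.univ := by
  have hmain : volume ({x : ℝ | ∀ᶠ k in atTop, nintDist (n k * x) ≤ 1/4} ∩ Set.Icc 0 1)
      ≤ 1/2 := by
    set C : ℕ → Set ℝ :=
      fun K => {x : ℝ | ∀ k, K ≤ k → nintDist (n k * x) ≤ 1/4} ∩ Icc 0 1 with hC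
    have hunion : {x : ℝ | ∀ᶠ k in atTop, nintDist (n k * x) ≤ 1/4} ∩ Set.Icc 0 1
        = ⋃ K, C K := by
      ext x
      simp only [hC, mem_inter_iff, mem_iUnion, mem_setOf_eq, eventually_atTop]
      constructor
      · rintro ⟨⟨K, hK⟩, hx⟩; exact ⟨K, hK, hx⟩
      · rintro ⟨K, hK, hx⟩; exact ⟨⟨K, hK⟩, hx⟩
    rw [hunion]
    have hdir : Directed (· ⊆ ·) C := by
      intro i j
      refine ⟨max i j, fun x hx => ⟨fun k hk => hx.1 k (le_trans (le_max_left _ _) hk), hx.2⟩,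
        fun x hx => ⟨fun k hk => hx.1 k (le_trans (le_max_right _ _) hk), hx.2⟩⟩
    rw [hdir.measure_iUnion]
    refine iSup_le fun K => ?_
    have hk1 : 1 ≤ n (max K 1) := le_trans (le_max_right K 1) hn.le_apply
    refine le_trans (measure_mono ?_) (key (n (max K 1)) hk1)
    rintro x ⟨hx1, hx2⟩
    exact ⟨hx1 (max K 1) (le_max_left _ _), hx2⟩
  refine ⟨hmain, fun hH => ?_⟩
  rw [hH, univ_inter, Real.volume_Icc] at hmain
  norm_num at hmain
end

section
/- Every Arbault set has Lebesgue measure zero. -/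
open MeasureTheory Filter Set

lemma cover_subset (n : ℕ) (hn : 1 ≤ n) (ε : ℝ) (hε : ε ≤ 1/2) (m : ℤ) :
    {x : ℝ | nintDist (n * x) ≤ ε} ∩ Icc (m : ℝ) (m + 1) ⊆
      ⋃ j ∈ Finset.Icc ((n:ℤ) * m - 1) ((n:ℤ) * m + n + 1),
        Icc (((j:ℝ) - ε) / n) (((j:ℝ) + ε) / n) := by
  rintro x ⟨hx1, hx2⟩
  have hn0 : (0:ℝ) < n := by exact_mod_cast hn
  set j : ℤ := round ((n:ℝ) * x) with hj
  have habs : |(n:ℝ) * x - j| ≤ ε := hx1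
  rw [abs_le] at habs
  have hxm : (m:ℝ) ≤ x := hx2.1
  have hxm' : x ≤ (m:ℝ) + 1 := hx2.2
  refine mem_iUnion₂.2 ⟨j, ?_, ?_⟩
  · rw [Finset.mem_Icc]
    constructor
    · have : ((n:ℤ) * m - 1 : ℤ) ≤ (j : ℤ) := by
        have h1 : (n:ℝ) * m - 1 ≤ (j:ℝ) := by nlinarith
        exact_mod_cast (by push_cast; linarith : ((((n:ℤ) * m - 1 : ℤ)):ℝ) ≤ (j:ℝ))
      exact this
    · exact_mod_cast (by push_cast; nlinarith : ((j:ℝ)) ≤ (((n:ℤ) * m + n + 1 : ℤ):ℝ))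
  · constructor
    · rw [div_le_iff₀ hn0]; linarith
    · rw [le_div_iff₀ hn0]; linarith

lemma meas_bound (n : ℕ) (hn : 1 ≤ n) (ε : ℝ) (hε0 : 0 ≤ ε) (hε : ε ≤ 1/2) (m : ℤ) :
    volume ({x : ℝ | nintDist (n * x) ≤ ε} ∩ Icc (m : ℝ) (m + 1)) ≤ ENNReal.ofReal (8 * ε) := by
  have hn0 : (0:ℝ) < n := by exact_mod_cast hn
  calc volume ({x : ℝ | nintDist (n * x) ≤ ε} ∩ Icc (m : ℝ) (m + 1))
      ≤ volume (⋃ j ∈ Finset.Icc ((n:ℤ) * m - 1) ((n:ℤ) * m + n + 1),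
          Icc (((j:ℝ) - ε) / n) (((j:ℝ) + ε) / n)) :=
        measure_mono (cover_subset n hn ε hε m)
    _ ≤ ∑ j ∈ Finset.Icc ((n:ℤ) * m - 1) ((n:ℤ) * m + n + 1),
          volume (Icc (((j:ℝ) - ε) / n) (((j:ℝ) + ε) / n)) := measure_biUnion_finset_le _ _
    _ ≤ ENNReal.ofReal (8 * ε) := by
        have hvol : ∀ j : ℤ, volume (Icc (((j:ℝ) - ε) / n) (((j:ℝ) + ε) / n))
            = ENNReal.ofReal (2 * ε / n) := by
          intro j
          rw [Real.volume_Icc]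
          congr 1
          field_simp
          ring
        simp only [hvol, Finset.sum_const, nsmul_eq_mul]
        have hcard : (Finset.Icc ((n:ℤ) * m - 1) ((n:ℤ) * m + n + 1)).card = n + 3 := by
          rw [Int.card_Icc]
          omega
        rw [hcard]
        rw [← ENNReal.ofReal_natCast (n + 3), ← ENNReal.ofReal_mul (by positivity)]
        apply ENNReal.ofReal_le_ofReal
        push_cast
        have hn1 : (1:ℝ) ≤ n := by exact_mod_cast hn
        rw [mul_div_assoc', div_le_iff₀ hn0]
        nlinarith [mul_nonneg hε0 (sub_nonneg.2 hn1)]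

theorem stmt14 (E : Set ℝ) (hE : IsArbault E) : volume E = 0 := by
  obtain ⟨n, hmono, hn⟩ := hE
  have key : ∀ m : ℤ, volume (E ∩ Icc (m : ℝ) (m + 1)) = 0 := by
    intro m
    have hle : ∀ ε : ℝ, 0 < ε → ε ≤ 1/2 →
        volume (E ∩ Icc (m : ℝ) (m + 1)) ≤ ENNReal.ofReal (8 * ε) := by
      intro ε hε0 hε
      set S : ℕ → Set ℝ := fun N =>
        (⋂ k, ⋂ (_ : N ≤ k), {x : ℝ | nintDist (n k * x) ≤ ε}) ∩ Icc (m : ℝ) (m + 1) with hS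
      have hsub : E ∩ Icc (m : ℝ) (m + 1) ⊆ ⋃ N, S N := by
        rintro x ⟨hxE, hxI⟩
        have hev : ∀ᶠ k in atTop, nintDist (n k * x) ≤ ε :=
          (hn x hxE).eventually (eventually_le_nhds hε0)
        obtain ⟨N, hN⟩ := hev.exists_forall_of_atTop
        exact mem_iUnion.2 ⟨N, ⟨mem_iInter₂.2 fun k hk => hN k hk, hxI⟩⟩
      have hmonoS : Monotone S := by
        intro N N' hNN'
        refine inter_subset_inter ?_ subset_rfl
        exact iInter₂_mono' fun k hk => ⟨k, hNN'.trans hk, subset_rfl⟩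
      calc volume (E ∩ Icc (m : ℝ) (m + 1)) ≤ volume (⋃ N, S N) := measure_mono hsub
        _ = ⨆ N, volume (S N) := (hmonoS.directed_le).measure_iUnion
        _ ≤ ENNReal.ofReal (8 * ε) := by
            refine iSup_le fun N => ?_
            have h1 : 1 ≤ n (max N 1) := le_trans (le_max_right N 1) (hmono.le_apply)
            have hsub2 : S N ⊆ {x : ℝ | nintDist (n (max N 1) * x) ≤ ε} ∩ Icc (m : ℝ) (m + 1) :=
              inter_subset_inter
                (iInter₂_subset (max N 1) (le_max_left N 1)) subset_rfl
            exact le_trans (measure_mono hsub2) (meas_bound _ h1 ε hε0.le hε m)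
    refine le_antisymm ?_ zero_le
    have htend : Tendsto (fun j : ℕ => ENNReal.ofReal (8 * (1/2 : ℝ) ^ (j + 1))) atTop (nhds 0) := by
      have hpow : Tendsto (fun j : ℕ => ((1:ℝ)/2) ^ (j + 1)) atTop (nhds 0) :=
        (tendsto_pow_atTop_nhds_zero_of_lt_one (by norm_num : (0:ℝ) ≤ 1/2)
          (by norm_num : (1/2:ℝ) < 1)).comp (tendsto_add_atTop_nat 1)
      have h0 := hpow.const_mul (8 : ℝ)
      rw [mul_zero] at h0
      simpa using ENNReal.tendsto_ofReal h0
    refine ge_of_tendsto' htend fun j => ?_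
    have hsmall : ((1:ℝ)/2) ^ (j + 1) ≤ 1/2 := by
      calc ((1:ℝ)/2) ^ (j+1) ≤ ((1:ℝ)/2)^1 :=
            pow_le_pow_of_le_one (by norm_num) (by norm_num) (by omega)
        _ = 1/2 := pow_one _
    exact hle _ (by positivity) hsmall
  refine le_antisymm ?_ zero_le
  calc volume E ≤ volume (⋃ m : ℤ, E ∩ Icc (m : ℝ) (m + 1)) := by
        refine measure_mono fun x hx => mem_iUnion.2 ⟨⌊x⌋, hx, ?_, ?_⟩
        · exact Int.floor_le x
        · exact (Int.lt_floor_add_one x).le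
    _ ≤ ∑' m : ℤ, volume (E ∩ Icc (m : ℝ) (m + 1)) := measure_iUnion_le _
    _ = 0 := by simp [key]
end

section
/- Every Dirichlet set is meager and has Lebesgue measure zero. -/
open MeasureTheory Filter Set

lemma nintDist_le (x : ℝ) (z : ℤ) : nintDist x ≤ |x - z| := round_le x z

lemma nintDist_lip : LipschitzWith 1 nintDist := by
  apply LipschitzWith.of_dist_le_mul
  intro x y
  rw [Real.dist_eq, Real.dist_eq, NNReal.coe_one, one_mul]
  rw [abs_sub_le_iff]
  constructor
  · have h1 : |x - (round x:ℝ)| ≤ |x - round y| := nintDist_le x _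
    have : |x - (round y : ℝ)| ≤ |x - y| + |y - round y| := by
      have := abs_sub_le x y (round y); linarith
    unfold nintDist; linarith [h1]
  · have h1 : |y - (round y:ℝ)| ≤ |y - round x| := nintDist_le y _
    have : |y - (round x : ℝ)| ≤ |y - x| + |x - round x| := by
      have := abs_sub_le y x (round x); linarith
    rw [abs_sub_comm y x] at this
    unfold nintDist; linarith [h1]

lemma continuous_nintDist : Continuous nintDist := nintDist_lip.continuous

lemma cover_bound (N : ℕ) (hN : 1 ≤ N) (ε : ℝ) (hε : 0 ≤ ε) (hε1 : ε ≤ 1) (m : ℤ) :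
    volume ({x : ℝ | nintDist (N * x) ≤ ε} ∩ Icc (m : ℝ) (m + 1)) ≤ ENNReal.ofReal (8 * ε) := by
  have hN0 : (0 : ℝ) < N := by exact_mod_cast hN
  have hsub : {x : ℝ | nintDist (N * x) ≤ ε} ∩ Icc (m : ℝ) (m + 1) ⊆
      ⋃ j ∈ Finset.Icc ((N : ℤ) * m - 1) ((N : ℤ) * m + N + 1),
        Icc (((j : ℝ) - ε) / N) (((j : ℝ) + ε) / N) := by
    rintro x ⟨hx, hm, hm1⟩
    have hx' : |(N : ℝ) * x - round ((N : ℝ) * x)| ≤ ε := hx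
    set j := round ((N : ℝ) * x) with hj
    have h1 : (N : ℝ) * m ≤ (N : ℝ) * x := by nlinarith
    have h2 : (N : ℝ) * x ≤ (N : ℝ) * m + N := by nlinarith
    have habs := abs_le.mp hx'
    have hjlo : ((N : ℤ) * m - 1 : ℤ) ≤ j := by
      have : ((N : ℤ) * m - 1 : ℤ) ≤ (j : ℝ) → ((N : ℤ) * m - 1 : ℤ) ≤ j := by
        intro h; exact_mod_cast h
      apply this; push_cast; linarith [habs.1]
    have hjhi : j ≤ ((N : ℤ) * m + N + 1 : ℤ) := by
      have : (j : ℝ) ≤ ((N : ℤ) * m + N + 1 : ℤ) → j ≤ ((N : ℤ) * m + N + 1 : ℤ) := by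
        intro h; exact_mod_cast h
      apply this; push_cast; linarith [habs.2]
    refine mem_biUnion (Finset.mem_Icc.mpr ⟨hjlo, hjhi⟩) ?_
    constructor
    · rw [div_le_iff₀ hN0]; linarith [habs.2]
    · rw [le_div_iff₀ hN0]; linarith [habs.1]
  calc volume ({x : ℝ | nintDist (N * x) ≤ ε} ∩ Icc (m : ℝ) (m + 1))
      ≤ volume (⋃ j ∈ Finset.Icc ((N : ℤ) * m - 1) ((N : ℤ) * m + N + 1),
        Icc (((j : ℝ) - ε) / N) (((j : ℝ) + ε) / N)) := measure_mono hsub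
    _ ≤ ∑ j ∈ Finset.Icc ((N : ℤ) * m - 1) ((N : ℤ) * m + N + 1),
        volume (Icc (((j : ℝ) - ε) / N) (((j : ℝ) + ε) / N)) := measure_biUnion_finset_le _ _
    _ ≤ ENNReal.ofReal (8 * ε) := by
        have hvol : ∀ j : ℤ, volume (Icc (((j : ℝ) - ε) / N) (((j : ℝ) + ε) / N))
            = ENNReal.ofReal (2 * ε / N) := by
          intro j
          rw [Real.volume_Icc, div_sub_div_same]
          ring_nf
        simp only [hvol, Finset.sum_const, nsmul_eq_mul]
        have hcard : (Finset.Icc ((N : ℤ) * m - 1) ((N : ℤ) * m + N + 1)).card = N + 3 := by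
          rw [Int.card_Icc]
          omega
        rw [hcard, ← ENNReal.ofReal_natCast, ← ENNReal.ofReal_mul (by positivity)]
        apply ENNReal.ofReal_le_ofReal
        rw [mul_div_assoc]
        have h4 : (N : ℝ) + 3 ≤ 4 * N := by
          have : (1 : ℝ) ≤ N := by exact_mod_cast hN
          linarith
        push_cast
        have hd : 0 ≤ ε / N := by positivity
        have he : ε / N * N = ε := div_mul_cancel₀ _ (ne_of_gt hN0)
        nlinarith [h4, hd, he]

theorem stmt15 (E : Set ℝ) (hE : IsDirichlet E) :
    IsMeagre E ∧ volume E = 0 := by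
  obtain ⟨n, hmono, hn⟩ := hE
  set C : Set ℝ := ⋂ k : ℕ, {x : ℝ | nintDist ((n (k + 1) : ℝ) * x) ≤ (1/2) ^ (k + 1)} with hC
  have hEC : E ⊆ C := by
    intro x hx
    exact mem_iInter.mpr fun k => hn x hx (k + 1)
  have hclosed : IsClosed C := by
    apply isClosed_iInter
    intro k
    exact isClosed_le (continuous_nintDist.comp (continuous_const.mul continuous_id)) continuous_const
  -- measure zero of each slab
  have hslab : ∀ m : ℤ, volume (C ∩ Icc (m : ℝ) (m + 1)) = 0 := by
    intro m
    have hbd : ∀ k : ℕ, volume (C ∩ Icc (m : ℝ) (m + 1))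
        ≤ ENNReal.ofReal (8 * (1/2 : ℝ) ^ (k + 1)) := by
      intro k
      have h1 : C ∩ Icc (m : ℝ) (m + 1) ⊆
          {x : ℝ | nintDist ((n (k + 1) : ℝ) * x) ≤ (1/2) ^ (k + 1)} ∩ Icc (m : ℝ) (m + 1) :=
        inter_subset_inter_left _ (iInter_subset _ k)
      refine (measure_mono h1).trans ?_
      exact cover_bound (n (k + 1)) (le_trans (Nat.succ_le_succ (Nat.zero_le k)) hmono.le_apply)
        _ (by positivity) (by
          calc ((1:ℝ)/2) ^ (k+1) ≤ (1/2)^0 := by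
                apply pow_le_pow_of_le_one <;> norm_num
            _ = 1 := by norm_num) m
    have htend : Filter.Tendsto (fun k : ℕ => ENNReal.ofReal (8 * (1/2 : ℝ) ^ (k + 1)))
        atTop (nhds 0) := by
      have h2 : Filter.Tendsto (fun k : ℕ => 8 * (1/2 : ℝ) ^ (k + 1)) atTop (nhds 0) := by
        have := (tendsto_pow_atTop_nhds_zero_of_lt_one (by norm_num : (0:ℝ) ≤ 1/2)
          (by norm_num : (1/2 : ℝ) < 1)).comp (tendsto_add_atTop_nat 1)
        simpa using this.const_mul (8 : ℝ)
      have := (ENNReal.continuous_ofReal.tendsto 0).comp h2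
      rw [ENNReal.ofReal_zero] at this
      exact this
    exact le_antisymm (ge_of_tendsto' htend hbd) (zero_le)
  have hCvol : volume C = 0 := by
    have hcover : C ⊆ ⋃ m : ℤ, C ∩ Icc (m : ℝ) (m + 1) := by
      intro x hx
      refine mem_iUnion.mpr ⟨⌊x⌋, hx, Int.floor_le x, ?_⟩
      linarith [Int.lt_floor_add_one x]
    refine le_antisymm ((measure_mono hcover).trans ?_) (zero_le)
    refine (measure_iUnion_le _).trans ?_
    simp [hslab]
  refine ⟨?_, le_antisymm ((measure_mono hEC).trans hCvol.le) (zero_le)⟩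
  -- meagre
  have hint : interior C = ∅ := by
    by_contra h
    have hne : (interior C).Nonempty := nonempty_iff_ne_empty.mpr h
    have := isOpen_interior.measure_pos volume hne
    have hle : volume (interior C) ≤ volume C := measure_mono interior_subset
    rw [hCvol] at hle
    exact absurd (le_antisymm hle (zero_le)) (ne_of_gt this)
  have hnd : IsNowhereDense C := hclosed.isNowhereDense_iff.mpr hint
  rw [isMeagre_iff_countable_union_isNowhereDense]
  exact ⟨{C}, by simpa using hnd, countable_singleton C, by simpa using hEC⟩
end
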